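/- arXiv:1303.5835 — 4 statements merged into one kernel-verified Lean document; each statement's English description precedes it below -/
import Mathlib

section
/- Let u : P₂(ℝ^d) → ℝ be differentiable (in the lifted/Lions sense) at every measure, with derivative ∂u(μ)(·). Then for every integer N ≥ 1 the empirical projection ū^N : (ℝ^d)^N → ℝ, ū^N(x₁,…,x_N) = u(N⁻¹ Σ_{j=1}^N δ_{x_j}), is differentiable on (ℝ^d)^N and, for every i ∈ {1,…,N} and every x = (x₁,…,x_N) ∈ (ℝ^d)^N, its partial gradient is ∂_{x_i} ū^N(x₁,…,x_N) = (1/N) ∂u(N⁻¹ Σ_{j=1}^N δ_{x_j})(x_i). -/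
open MeasureTheory ProbabilityTheory
open scoped ENNReal NNReal RealInnerProductSpace

noncomputable section

/-- `ℝ^d`. -/
abbrev Rd (d : ℕ) := EuclideanSpace ℝ (Fin d)

/-- A Borel probability measure on `ℝ^d` of order 2 (finite second moment). -/
def IsP2 {d : ℕ} (μ : Measure (Rd d)) : Prop :=
  IsProbabilityMeasure μ ∧ Integrable (fun x => ‖x‖ ^ 2) μ

/-- The empirical measure `N⁻¹ ∑_{j} δ_{x_j}` of a point `x = (x₁,…,x_N) ∈ (ℝ^d)^N`. -/
def empMeas {d N : ℕ} (x : Fin N → Rd d) : Measure (Rd d) :=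
  ((N : ℝ≥0∞))⁻¹ • ∑ j, Measure.dirac (x j)

/- Auxiliary lemmas -/

lemma integrable_dirac' {α E : Type*} [MeasurableSpace α] [MeasurableSingletonClass α]
    [NormedAddCommGroup E] {f : α → E} (hf : StronglyMeasurable f) (a : α) :
    Integrable f (Measure.dirac a) := by
  refine ⟨hf.aestronglyMeasurable, ?_⟩
  simp only [HasFiniteIntegral]
  rw [lintegral_dirac]
  exact ENNReal.coe_lt_top

lemma isP2_empMeas {d N : ℕ} (hN : 1 ≤ N) (y : Fin N → Rd d) : IsP2 (empMeas y) := by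
  have hN0 : (N : ℝ≥0∞) ≠ 0 := by
    simpa using Nat.one_le_iff_ne_zero.mp hN
  constructor
  · constructor
    rw [empMeas, Measure.smul_apply, Measure.finset_sum_apply]
    simp only [Measure.dirac_apply' _ MeasurableSet.univ, Set.indicator_univ, Pi.one_apply,
      Finset.sum_const, Finset.card_univ, Fintype.card_fin, nsmul_eq_mul, mul_one]
    simp only [smul_eq_mul]
    exact ENNReal.inv_mul_cancel hN0 (ENNReal.natCast_ne_top N)
  · rw [empMeas]
    refine Integrable.smul_measure ?_ (ENNReal.inv_ne_top.mpr hN0)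
    refine integrable_finset_sum_measure.mpr fun j _ => ?_
    exact _root_.integrable_dirac' ((continuous_norm.pow 2).stronglyMeasurable) _

lemma map_finset_sum_meas {ι α β : Type*} [MeasurableSpace α] [MeasurableSpace β]
    {f : α → β} (hf : Measurable f) (s : Finset ι) (μ : ι → Measure α) :
    Measure.map f (∑ i ∈ s, μ i) = ∑ i ∈ s, Measure.map f (μ i) := by
  classical
  induction s using Finset.induction_on with
  | empty => simp
  | @insert a s hi ih =>
    rw [Finset.sum_insert hi, Finset.sum_insert hi, Measure.map_add _ _ hf, ih]

lemma indicatorConstLp_smul' {α E : Type*} [MeasurableSpace α] {μ : Measure α}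
    [NormedAddCommGroup E] [NormedSpace ℝ E] {s : Set α} (hs : MeasurableSet s)
    (hμs : μ s ≠ ⊤) (c : ℝ) (v : E) :
    c • indicatorConstLp 2 hs hμs v = indicatorConstLp 2 hs hμs (c • v) := by
  refine Lp.ext ?_
  filter_upwards [Lp.coeFn_smul c (indicatorConstLp 2 hs hμs v),
    indicatorConstLp_coeFn (p := 2) (hs := hs) (hμs := hμs) (c := v),
    indicatorConstLp_coeFn (p := 2) (hs := hs) (hμs := hμs) (c := c • v)] with ω h1 h2 h3
  rw [h1, h3, Pi.smul_apply, h2]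
  by_cases hω : ω ∈ s <;> simp [Set.indicator_apply, hω]

lemma Lp_coeFn_finset_sum {α E ι : Type*} [MeasurableSpace α] {μ : Measure α}
    [NormedAddCommGroup E] (s : Finset ι) (f : ι → Lp E 2 μ) :
    ⇑(∑ i ∈ s, f i) =ᵐ[μ] fun ω => ∑ i ∈ s, f i ω := by
  classical
  induction s using Finset.induction_on with
  | empty => simp only [Finset.sum_empty]; exact Lp.coeFn_zero E 2 μ
  | @insert j s hj ih =>
    filter_upwards [Lp.coeFn_add (f j) (∑ i ∈ s, f i), ih] with ω h1 h2
    rw [Finset.sum_insert hj, h1, Pi.add_apply, h2]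
    rw [Finset.sum_insert hj]

set_option maxHeartbeats 2000000 in
/-- If `u : P₂(ℝ^d) → ℝ` is differentiable in the lifted (Lions) sense at
every measure, with derivative represented by the Borel maps `Du μ : ℝ^d → ℝ^d` (i.e. on an
atomless probability space `(Ω, P)` rich enough that every `μ ∈ P₂(ℝ^d)` is the law of an
`L²` random variable, the lift `ũ(X) = u(P_X)` is Fréchet differentiable at every
`X ∈ L²(Ω;ℝ^d)` with derivative `Y ↦ E[⟪Du(P_X)(X), Y⟫]`), then for every `N ≥ 1` the
empirical projection `ū^N(x₁,…,x_N) = u(N⁻¹ ∑_j δ_{x_j})` is differentiable on `(ℝ^d)^N`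
and its derivative at `x` acts on `h` as `∑_i ⟪(1/N) Du(μ̄^N_x)(x_i), h_i⟫`, i.e. the partial
gradient in `x_i` is `(1/N) Du(μ̄^N_x)(x_i)`. -/
theorem empirical_projection_differentiable
    {d : ℕ} {Ω : Type} [MeasurableSpace Ω] (P : Measure Ω) [IsProbabilityMeasure P]
    (hrich : ∀ μ : Measure (Rd d), IsP2 μ →
      ∃ X : Lp (Rd d) 2 P, Measure.map (⇑X) P = μ)
    (u : Measure (Rd d) → ℝ) (Du : Measure (Rd d) → Rd d → Rd d)
    (hBorel : ∀ μ : Measure (Rd d), Measurable (Du μ))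
    (hdiff : ∀ X : Lp (Rd d) 2 P, ∃ L : Lp (Rd d) 2 P →L[ℝ] ℝ,
      HasFDerivAt (fun Y : Lp (Rd d) 2 P => u (Measure.map (⇑Y) P)) L X ∧
      ∀ Y : Lp (Rd d) 2 P, L Y = ∫ ω, ⟪Du (Measure.map (⇑X) P) (X ω), Y ω⟫ ∂P)
    (N : ℕ) (hN : 1 ≤ N) (x : Fin N → Rd d) :
    ∃ L : (Fin N → Rd d) →L[ℝ] ℝ,
      HasFDerivAt (fun y : Fin N → Rd d => u (empMeas y)) L x ∧
      ∀ h : Fin N → Rd d, L h = ∑ i, ⟪(N : ℝ)⁻¹ • Du (empMeas x) (x i), h i⟫ := by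
  rcases Nat.eq_zero_or_pos d with rfl | hd
  · -- degenerate case `d = 0`: everything is trivial
    refine ⟨0, ?_, ?_⟩
    · have hx : (fun y : Fin N → Rd 0 => u (empMeas y)) = fun _ => u (empMeas x) := by
        funext y
        congr 1
        congr 1
        funext i
        exact Subsingleton.elim _ _
      rw [hx]
      exact hasFDerivAt_const _ _
    · intro h
      have : ∀ i, h i = 0 := fun i => Subsingleton.elim _ _
      simp [this]
  · -- main case `d ≥ 1`
    classical
    -- distinct anchor points
    set e0 : Fin d := ⟨0, hd⟩ with he0
    set z : Fin N → Rd d := fun j => ((j : ℕ) : ℝ) • EuclideanSpace.single e0 1 with hzdef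
    have hzinj : Function.Injective z := by
      intro j k hjk
      have h1 : z j e0 = ((j : ℕ) : ℝ) := by simp [hzdef]
      have h2 : z k e0 = ((k : ℕ) : ℝ) := by simp [hzdef]
      have : ((j : ℕ) : ℝ) = ((k : ℕ) : ℝ) := by rw [← h1, ← h2, hjk]
      exact Fin.ext (Nat.cast_injective this)
    obtain ⟨Z, hZ⟩ := hrich (empMeas z) (isP2_empMeas hN z)
    have hZm : Measurable (⇑Z) := (Lp.stronglyMeasurable Z).measurable
    set A : Fin N → Set Ω := fun j => ⇑Z ⁻¹' {z j} with hAdef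
    have hA : ∀ j, MeasurableSet (A j) := fun j => hZm (measurableSet_singleton _)
    have hN0 : (N : ℝ≥0∞) ≠ 0 := by simpa using Nat.one_le_iff_ne_zero.mp hN
    have hemp_singleton : ∀ j, empMeas z {z j} = (N : ℝ≥0∞)⁻¹ := by
      intro j
      rw [empMeas, Measure.smul_apply, Measure.finset_sum_apply]
      have : ∀ k : Fin N, Measure.dirac (z k) {z j} = if k = j then 1 else 0 := by
        intro k
        rw [Measure.dirac_apply]
        by_cases hkj : k = j
        · simp [hkj]
        · have : z k ∉ ({z j} : Set (Rd d)) := by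
            simp only [Set.mem_singleton_iff]
            exact fun hc => hkj (hzinj hc)
          simp [Set.indicator_apply, this, hkj]
      simp only [this, Finset.sum_ite_eq', Finset.mem_univ, if_true, smul_eq_mul, mul_one]
    have hPA : ∀ j, P (A j) = (N : ℝ≥0∞)⁻¹ := by
      intro j
      have : Measure.map (⇑Z) P {z j} = P (A j) :=
        Measure.map_apply hZm (measurableSet_singleton _)
      rw [← this, hZ, hemp_singleton]
    have hAfin : ∀ j, P (A j) ≠ ⊤ := fun j => by
      rw [hPA j]; exact ENNReal.inv_ne_top.mpr hN0
    -- the linear embedding sends y to the simple function taking value y j on A j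
    set Tl : (Fin N → Rd d) →ₗ[ℝ] Lp (Rd d) 2 P :=
      { toFun := fun y => ∑ j, indicatorConstLp 2 (hA j) (hAfin j) (y j)
        map_add' := by
          intro y y'
          rw [← Finset.sum_add_distrib]
          exact Finset.sum_congr rfl fun j _ => (indicatorConstLp_add).symm
        map_smul' := by
          intro c y
          simp only [RingHom.id_apply, Finset.smul_sum]
          exact Finset.sum_congr rfl fun j _ =>
            (indicatorConstLp_smul' (hA j) (hAfin j) c (y j)).symm } with hTl
    set T : (Fin N → Rd d) →L[ℝ] Lp (Rd d) 2 P := LinearMap.toContinuousLinearMap Tl with hT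
    have hTcoe : ∀ y : Fin N → Rd d,
        ⇑(T y) =ᵐ[P] fun ω => ∑ j, Set.indicator (A j) (fun _ => y j) ω := by
      intro y
      have h1 : ⇑(T y) =ᵐ[P] fun ω => ∑ j, (indicatorConstLp 2 (hA j) (hAfin j) (y j) : Lp (Rd d) 2 P) ω :=
        Lp_coeFn_finset_sum _ _
      have h2 : ∀ j : Fin N, ⇑(indicatorConstLp 2 (hA j) (hAfin j) (y j) : Lp (Rd d) 2 P)
          =ᵐ[P] (A j).indicator fun _ => y j := fun j => indicatorConstLp_coeFn
      have h3 : ∀ᵐ ω ∂P, ∀ j : Fin N, (indicatorConstLp 2 (hA j) (hAfin j) (y j) : Lp (Rd d) 2 P) ω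
          = (A j).indicator (fun _ => y j) ω := ae_all_iff.mpr h2
      filter_upwards [h1, h3] with ω hω1 hω2
      rw [hω1]
      exact Finset.sum_congr rfl fun j _ => hω2 j
    -- the law of T y is the empirical measure of y
    have hTmap : ∀ y : Fin N → Rd d, Measure.map (⇑(T y)) P = empMeas y := by
      intro y
      set g : Rd d → Rd d := fun v => ∑ j, Set.indicator ({z j} : Set (Rd d)) (fun _ => y j) v with hg
      have hgm : Measurable g := by
        refine Finset.measurable_sum _ fun j _ => ?_
        exact (measurable_const.indicator (measurableSet_singleton _))
      have hcomp : (fun ω => ∑ j, Set.indicator (A j) (fun _ => y j) ω) = g ∘ ⇑Z := by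
        funext ω
        simp only [Function.comp_apply, hg, hAdef]
        exact Finset.sum_congr rfl fun j _ => by
          by_cases hω : Z ω ∈ ({z j} : Set (Rd d)) <;>
            simp [Set.indicator_apply, hω]
      have step1 : Measure.map (⇑(T y)) P = Measure.map (g ∘ ⇑Z) P := by
        rw [Measure.map_congr (hTcoe y), hcomp]
      rw [step1, ← Measure.map_map hgm hZm, hZ, empMeas, Measure.map_smul,
        map_finset_sum_meas hgm]
      rw [empMeas]
      congr 1
      refine Finset.sum_congr rfl fun k _ => ?_
      rw [Measure.map_dirac' hgm]
      congr 1
      -- g (z k) = y k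
      rw [hg]
      have : ∀ j : Fin N, Set.indicator ({z j} : Set (Rd d)) (fun _ => y j) (z k)
          = if j = k then y k else 0 := by
        intro j
        by_cases hjk : j = k
        · simp [hjk]
        · have : z k ∉ ({z j} : Set (Rd d)) := by
            simp only [Set.mem_singleton_iff]
            exact fun hc => hjk (hzinj hc.symm)
          simp [Set.indicator_apply, this, hjk]
      simp only [this, Finset.sum_ite_eq', Finset.mem_univ, if_true]
    obtain ⟨L0, hL0, hL0v⟩ := hdiff (T x)
    refine ⟨L0.comp T, ?_, ?_⟩
    · have h1 : HasFDerivAt ((fun Y : Lp (Rd d) 2 P => u (Measure.map (⇑Y) P)) ∘ ⇑T)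
          (L0.comp T) x := hL0.comp x (T.hasFDerivAt)
      have h2 : (fun y : Fin N → Rd d => u (empMeas y))
          = (fun Y : Lp (Rd d) 2 P => u (Measure.map (⇑Y) P)) ∘ ⇑T := by
        funext y
        simp only [Function.comp_apply, hTmap y]
      rw [h2]
      exact h1
    · intro h
      have hcal : (L0.comp T) h = ∫ ω, ⟪Du (empMeas x) ((T x) ω), (T h) ω⟫ ∂P := by
        rw [ContinuousLinearMap.comp_apply, hL0v (T h), hTmap x]
      rw [hcal]
      set c : Fin N → ℝ := fun j => ⟪Du (empMeas x) (x j), h j⟫ with hc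
      have key : (fun ω => ⟪Du (empMeas x) ((T x) ω), (T h) ω⟫)
          =ᵐ[P] fun ω => ∑ j, Set.indicator (A j) (fun _ => c j) ω := by
        filter_upwards [hTcoe x, hTcoe h] with ω hωx hωh
        rw [hωx, hωh]
        by_cases hω : ∃ j, Z ω = z j
        · obtain ⟨j, hj⟩ := hω
          have hmem : ω ∈ A j := by simp [hAdef, hj]
          have hnot : ∀ k, k ≠ j → ω ∉ A k := by
            intro k hk hkmem
            have : z k = z j := by
              have h1 : Z ω = z k := hkmem
              rw [← h1, hj]
            exact hk (hzinj this)
          have sum_eq : ∀ v : Fin N → Rd d,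
              (∑ k, Set.indicator (A k) (fun _ => v k) ω) = v j := by
            intro v
            rw [Finset.sum_eq_single j]
            · simp [Set.indicator_apply, hmem]
            · intro k _ hk
              simp [Set.indicator_apply, hnot k hk]
            · simp
          rw [sum_eq x, sum_eq h]
          rw [Finset.sum_eq_single j]
          · simp [Set.indicator_apply, hmem, hc]
          · intro k _ hk
            simp [Set.indicator_apply, hnot k hk]
          · simp
        · have hnot : ∀ k, ω ∉ A k := fun k hkmem => hω ⟨k, hkmem⟩
          have sum_eq : ∀ v : Fin N → Rd d,
              (∑ k, Set.indicator (A k) (fun _ => v k) ω) = 0 := by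
            intro v
            refine Finset.sum_eq_zero fun k _ => ?_
            simp [Set.indicator_apply, hnot k]
          rw [sum_eq x, sum_eq h, inner_zero_right]
          refine (Finset.sum_eq_zero fun k _ => ?_).symm
          simp [Set.indicator_apply, hnot k]
      rw [integral_congr_ae key]
      have hint : ∀ j : Fin N, Integrable ((A j).indicator fun _ => c j) P :=
        fun j => (integrable_const (c j)).indicator (hA j)
      rw [integral_finset_sum _ fun j _ => hint j]
      refine Finset.sum_congr rfl fun j _ => ?_
      rw [integral_indicator_const _ (hA j), Measure.real, hPA j]
      rw [real_inner_smul_left]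
      simp only [smul_eq_mul, hc]
      congr 1
      simp [ENNReal.toReal_inv]
end
end

section
/- Let u : P₂(ℝ^d) → ℝ be differentiable (in the lifted/Lions sense) with derivative family (∂u(μ)(·))_{μ} satisfying E[|∂u(P_ξ)(ξ) − ∂u(P_{ξ'})(ξ')|²] ≤ C² E[|ξ − ξ'|²] for all ξ, ξ' ∈ L²(Ω;ℝ^d), and for each μ choose the everywhere C-Lipschitz version of ∂u(μ)(·). Then for every μ ∈ P₂(ℝ^d), every N ≥ 1 and every x = (x₁,…,x_N), y = (y₁,…,y_N) ∈ (ℝ^d)^N, |Σ_{i=1}^N ∂_{x_i} ū^N(x)·(y_i − x_i) − (1/N) Σ_{i=1}^N ∂u(μ)(x_i)·(y_i − x_i)| ≤ 2C · W₂(μ̄^N_x, μ) · (N⁻¹ Σ_{i=1}^N |y_i − x_i|²)^{1/2}, where μ̄^N_x = N⁻¹ Σ_{i=1}^N δ_{x_i} and ū^N(x) = u(μ̄^N_x). -/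
open MeasureTheory ProbabilityTheory
open scoped ENNReal NNReal RealInnerProductSpace

noncomputable section

/-- A coupling of `μ` and `ν`: a probability measure on `ℝ^d × ℝ^d` with marginals `μ`, `ν`. -/
def IsCoupling {d : ℕ} (π : Measure (Rd d × Rd d)) (μ ν : Measure (Rd d)) : Prop :=
  IsProbabilityMeasure π ∧ π.map Prod.fst = μ ∧ π.map Prod.snd = ν

/-- The 2-Wasserstein distance between two measures on `ℝ^d`. -/
def W2 {d : ℕ} (μ ν : Measure (Rd d)) : ℝ :=
  sInf { r : ℝ | ∃ π : Measure (Rd d × Rd d), IsCoupling π μ ν ∧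
      r = (∫ p, ‖p.1 - p.2‖ ^ 2 ∂π) ^ (1/2 : ℝ) }

lemma empMeas_apply {d N : ℕ} (x : Fin N → Rd d) (s : Set (Rd d)) :
    empMeas x s = ((N : ℝ≥0∞))⁻¹ * ∑ j, s.indicator 1 (x j) := by
  simp [empMeas, Measure.smul_apply, Measure.coe_finset_sum, Finset.sum_apply,
    Measure.dirac_apply, smul_eq_mul]

lemma empMeas_prob {d N : ℕ} (hN : 1 ≤ N) (x : Fin N → Rd d) :
    IsProbabilityMeasure (empMeas x) := by
  constructor
  rw [empMeas_apply]
  simp only [Set.indicator_univ, Pi.one_apply, Finset.sum_const, Finset.card_univ,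
    Fintype.card_fin, nsmul_eq_mul, mul_one]
  rw [ENNReal.inv_mul_cancel (by exact_mod_cast Nat.one_le_iff_ne_zero.mp hN) (by simp)]

lemma integrable_empMeas {d N : ℕ} (hN : 1 ≤ N) (x : Fin N → Rd d) (f : Rd d → ℝ)
    (hf : StronglyMeasurable f) : Integrable f (empMeas x) := by
  refine Integrable.smul_measure ?_
    (by simp [Nat.one_le_iff_ne_zero.mp hN])
  rw [integrable_finset_sum_measure]
  intro j _
  refine (integrable_const (f (x j))).congr ?_
  rw [Filter.EventuallyEq, ae_dirac_eq]
  exact Filter.eventually_pure.2 rfl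

lemma integral_empMeas {d N : ℕ} (x : Fin N → Rd d) (f : Rd d → ℝ) :
    ∫ a, f a ∂(empMeas x) = (N : ℝ)⁻¹ * ∑ j, f (x j) := by
  unfold empMeas
  rw [integral_smul_measure, integral_finset_sum_measure (fun j _ => by
    refine (integrable_const (f (x j))).congr ?_
    rw [Filter.EventuallyEq, ae_dirac_eq]
    exact Filter.eventually_pure.2 rfl)]
  simp [integral_dirac, ENNReal.toReal_inv, smul_eq_mul]

lemma empMeas_isP2 {d N : ℕ} (hN : 1 ≤ N) (x : Fin N → Rd d) : IsP2 (empMeas x) :=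
  ⟨empMeas_prob hN x, integrable_empMeas hN x _ ((continuous_norm.pow 2).stronglyMeasurable)⟩

lemma map_empMeas {d N : ℕ} {h : Rd d → Rd d} (hm : Measurable h) (x : Fin N → Rd d) :
    (empMeas x).map h = empMeas (h ∘ x) := by
  ext s hs
  rw [Measure.map_apply hm hs, empMeas_apply, empMeas_apply]
  have h2 : ∀ j, s.indicator (1 : Rd d → ℝ≥0∞) ((h ∘ x) j)
      = (h ⁻¹' s).indicator (1 : Rd d → ℝ≥0∞) (x j) := fun j => by
    by_cases hx : h (x j) ∈ s <;>
      simp [Set.indicator_apply, hx, Set.mem_preimage, Function.comp]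
  simp only [h2]

lemma W2_mem_nonneg {d : ℕ} {μ ν : Measure (Rd d)} {r : ℝ}
    (hr : r ∈ { r : ℝ | ∃ π : Measure (Rd d × Rd d), IsCoupling π μ ν ∧
      r = (∫ p, ‖p.1 - p.2‖ ^ 2 ∂π) ^ (1/2 : ℝ) }) : 0 ≤ r := by
  obtain ⟨π, -, rfl⟩ := hr
  exact Real.rpow_nonneg (integral_nonneg fun p => by positivity) _

lemma W2_nonneg {d : ℕ} (μ ν : Measure (Rd d)) : 0 ≤ W2 μ ν :=
  Real.sInf_nonneg fun r hr => W2_mem_nonneg hr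

section Embed
variable {d N : ℕ}

/-- coordinatewise arctan map. -/
def psiE (z : Rd d) : Rd d := (WithLp.equiv 2 _).symm (fun i => Real.arctan (z i))

lemma psiE_apply (z : Rd d) (i : Fin d) : psiE z i = Real.arctan (z i) := rfl

lemma psiE_continuous : Continuous (psiE (d := d)) := by
  exact (PiLp.continuous_toLp 2 (fun _ : Fin d => ℝ)).comp
    (continuous_pi fun i => Real.continuous_arctan.comp
      ((continuous_apply i).comp (PiLp.continuous_ofLp 2 (fun _ : Fin d => ℝ))))

lemma norm_psiE_le (z : Rd d) : ‖psiE z‖ ≤ 2 * Real.sqrt d := by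
  rw [EuclideanSpace.norm_eq]
  have h1 : ∀ i : Fin d, ‖psiE z i‖ ^ 2 ≤ 4 := by
    intro i
    have h2 := Real.arctan_lt_pi_div_two (z i)
    have h3 := Real.neg_pi_div_two_lt_arctan (z i)
    have hpi : Real.pi / 2 < 2 := by
      have := Real.pi_lt_d2; linarith
    rw [psiE_apply, Real.norm_eq_abs]
    nlinarith [sq_abs (Real.arctan (z i)), abs_nonneg (Real.arctan (z i)),
      neg_abs_le (Real.arctan (z i)), le_abs_self (Real.arctan (z i))]
  calc Real.sqrt (∑ i, ‖psiE z i‖ ^ 2) ≤ Real.sqrt (∑ _i : Fin d, 4) :=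
        Real.sqrt_le_sqrt (Finset.sum_le_sum fun i _ => h1 i)
    _ = 2 * Real.sqrt d := by
        rw [Finset.sum_const, Finset.card_univ, Fintype.card_fin, nsmul_eq_mul]
        rw [show ((d : ℝ) * 4) = (2 * Real.sqrt d) ^ 2 by
          rw [mul_pow, Real.sq_sqrt (by positivity)]; ring]
        exact Real.sqrt_sq (by positivity)

variable (hd : 0 < d)

def iZero (hd : 0 < d) : Fin d := ⟨0, hd⟩

def e0 (hd : 0 < d) : Rd d := EuclideanSpace.single (iZero hd) 1

/-- embedding of `Fin N × Rd d` into `Rd d`. -/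
def PhiE (hd : 0 < d) (p : Fin N × Rd d) : Rd d :=
  psiE p.2 + ((4 : ℝ) * (p.1 : ℕ)) • e0 hd

lemma PhiE_apply (p : Fin N × Rd d) (i : Fin d) :
    PhiE hd p i = Real.arctan (p.2 i) + (4 : ℝ) * (p.1 : ℕ) * (EuclideanSpace.single (iZero hd) (1:ℝ) i) := by
  simp [PhiE, e0, psiE_apply, PiLp.add_apply, PiLp.smul_apply, smul_eq_mul]

lemma PhiE_continuous : Continuous (PhiE (N := N) hd) := by
  refine Continuous.add (psiE_continuous.comp continuous_snd) ?_
  exact ((continuous_of_discreteTopology (f := fun j : Fin N => ((4 : ℝ) * (j : ℕ)) • e0 hd)).comp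
    continuous_fst)

lemma PhiE_measurable : Measurable (PhiE (N := N) hd) := (PhiE_continuous hd).measurable

lemma norm_PhiE_le (p : Fin N × Rd d) : ‖PhiE hd p‖ ≤ 2 * Real.sqrt d + 4 * N := by
  refine (norm_add_le _ _).trans (add_le_add (norm_psiE_le _) ?_)
  rw [norm_smul]
  have h0 : ‖e0 hd‖ = 1 := by
    simp [e0, EuclideanSpace.norm_single]
  rw [h0, mul_one, Real.norm_eq_abs, abs_of_nonneg (by positivity)]
  have : (p.1 : ℕ) ≤ (N : ℝ) := by exact_mod_cast (p.1.2.le)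
  linarith

variable (hN0 : 0 < N)

def GjE (hd : 0 < d) (hN0 : 0 < N) (v : Rd d) : Fin N :=
  ⟨(⌊(v (iZero hd) + 2) / 4⌋).toNat % N, Nat.mod_lt _ hN0⟩

lemma GjE_PhiE (p : Fin N × Rd d) : GjE hd hN0 (PhiE hd p) = p.1 := by
  have hv : PhiE hd p (iZero hd) = Real.arctan (p.2 (iZero hd)) + 4 * (p.1 : ℕ) := by
    rw [PhiE_apply, EuclideanSpace.single_apply, if_pos rfl, mul_one]
  have harc : |Real.arctan (p.2 (iZero hd))| < 2 := by
    have h2 := Real.arctan_lt_pi_div_two (p.2 (iZero hd))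
    have h3 := Real.neg_pi_div_two_lt_arctan (p.2 (iZero hd))
    have := Real.pi_lt_d2
    rw [abs_lt]; constructor <;> linarith
  have hfloor : ⌊(PhiE hd p (iZero hd) + 2) / 4⌋ = ((p.1 : ℕ) : ℤ) := by
    rw [hv, Int.floor_eq_iff]
    rw [abs_lt] at harc
    constructor
    · push_cast; rw [le_div_iff₀ (by norm_num)]; linarith
    · push_cast; rw [div_lt_iff₀ (by norm_num)]; linarith
  ext
  simp [GjE, hfloor, Nat.mod_eq_of_lt p.1.2]

lemma GjE_measurable : Measurable (GjE (N := N) hd hN0) := by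
  have h1 : Measurable fun v : Rd d => ⌊(v (iZero hd) + 2) / 4⌋ :=
    Int.measurable_floor.comp
      ((((EuclideanSpace.proj (iZero hd)).continuous.measurable).add_const 2).div_const 4)
  exact (measurable_of_countable (fun z : ℤ => (⟨z.toNat % N, Nat.mod_lt _ hN0⟩ : Fin N))).comp h1

def GzE (hd : 0 < d) (hN0 : 0 < N) (v : Rd d) : Rd d :=
  (WithLp.equiv 2 _).symm
    (fun i => Real.tan (v i - ((4 : ℝ) * ((GjE hd hN0 v : Fin N) : ℕ)) * (EuclideanSpace.single (iZero hd) (1:ℝ) i)))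

lemma GzE_PhiE (p : Fin N × Rd d) : GzE hd hN0 (PhiE hd p) = p.2 := by
  apply PiLp.ext
  intro i
  have : GzE hd hN0 (PhiE hd p) i
      = Real.tan (PhiE hd p i - 4 * (p.1 : ℕ) * (EuclideanSpace.single (iZero hd) (1:ℝ) i)) := by
    rw [GzE, GjE_PhiE hd hN0 p]; rfl
  rw [this, PhiE_apply]
  ring_nf
  exact Real.tan_arctan _
lemma measurable_tanR : Measurable Real.tan := by
  have : Real.tan = fun x => Real.sin x / Real.cos x := funext Real.tan_eq_sin_div_cos
  rw [this]
  exact Real.continuous_sin.measurable.div Real.continuous_cos.measurable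

lemma GzE_measurable : Measurable (GzE (N := N) hd hN0) := by
  refine (PiLp.continuous_toLp 2 (fun _ : Fin d => ℝ)).measurable.comp ?_
  refine measurable_pi_lambda _ fun i => ?_
  refine measurable_tanR.comp ?_
  refine Measurable.sub ((EuclideanSpace.proj i).continuous.measurable) ?_
  exact ((measurable_of_countable (fun j : Fin N => ((4:ℝ) * (j:ℕ)) * (EuclideanSpace.single (iZero hd) (1:ℝ) i))).comp (GjE_measurable hd hN0))

end Embed

lemma fderiv_empirical {d N : ℕ} {Ω : Type} [MeasurableSpace Ω] (P : Measure Ω)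
    [IsProbabilityMeasure P]
    (hrich : ∀ μ : Measure (Rd d), IsP2 μ →
      ∃ X : Lp (Rd d) 2 P, Measure.map (⇑X) P = μ)
    (u : Measure (Rd d) → ℝ) (Du : Measure (Rd d) → Rd d → Rd d)
    (hBorel : ∀ μ : Measure (Rd d), Measurable (Du μ))
    (hdiff : ∀ X : Lp (Rd d) 2 P, ∃ L : Lp (Rd d) 2 P →L[ℝ] ℝ,
      HasFDerivAt (fun Y : Lp (Rd d) 2 P => u (Measure.map (⇑Y) P)) L X ∧
      ∀ Y : Lp (Rd d) 2 P, L Y = ∫ ω, ⟪Du (Measure.map (⇑X) P) (X ω), Y ω⟫ ∂P)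
    (hN : 1 ≤ N) (hd : 0 < d) (x y : Fin N → Rd d) :
    fderiv ℝ (fun z : Fin N → Rd d => u (empMeas z)) x (y - x)
      = (N : ℝ)⁻¹ * ∑ i, ⟪Du (empMeas x) (x i), y i - x i⟫ := by
  classical
  set w : Fin N → Rd d := fun j => ((j : ℕ) : ℝ) • e0 hd with hw
  have hwinj : Function.Injective w := by
    intro j k hjk
    have h0 : ((j : ℕ) : ℝ) = ((k : ℕ) : ℝ) := by
      have := congrArg (fun v : Rd d => v (iZero hd)) hjk
      simpa [hw, e0, PiLp.smul_apply, EuclideanSpace.single_apply, smul_eq_mul] using this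
    exact Fin.ext (by exact_mod_cast h0)
  obtain ⟨ξ0, hξ0⟩ := hrich (empMeas w) (empMeas_isP2 hN w)
  set g : Ω → Rd d := (Lp.aestronglyMeasurable ξ0).mk _ with hgdef
  have hg : Measurable g := (Lp.aestronglyMeasurable ξ0).stronglyMeasurable_mk.measurable
  have hgae : ⇑ξ0 =ᵐ[P] g := (Lp.aestronglyMeasurable ξ0).ae_eq_mk
  have hmapg : Measure.map g P = empMeas w := by
    rw [← Measure.map_congr hgae, hξ0]
  set F2 : (Fin N → Rd d) → Rd d → Rd d :=
    fun z a => ∑ j, Set.indicator {w j} (fun _ => z j) a with hF2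
  have hF2meas : ∀ z, Measurable (F2 z) := by
    intro z
    exact Finset.measurable_sum _ fun j _ =>
      (measurable_const.indicator (measurableSet_singleton _))
  have hF2w : ∀ z j, F2 z (w j) = z j := by
    intro z j
    show (∑ k, Set.indicator {w k} (fun _ => z k) (w j)) = z j
    rw [Finset.sum_eq_single j]
    · simp
    · intro k _ hkj
      apply Set.indicator_of_notMem
      simp only [Set.mem_singleton_iff]
      exact fun h => hkj (hwinj h.symm)
    · simp
  have hF2add : ∀ z z' a, F2 (z + z') a = F2 z a + F2 z' a := by
    intro z z' a
    rw [hF2, ← Finset.sum_add_distrib]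
    refine Finset.sum_congr rfl fun j _ => ?_
    by_cases hj : a ∈ ({w j} : Set (Rd d)) <;>
      simp [Set.indicator_apply, hj]
  have hF2smul : ∀ (c : ℝ) z a, F2 (c • z) a = c • F2 z a := by
    intro c z a
    rw [hF2, Finset.smul_sum]
    refine Finset.sum_congr rfl fun j _ => ?_
    by_cases hj : a ∈ ({w j} : Set (Rd d)) <;>
      simp [Set.indicator_apply, hj]
  have hF2bdd : ∀ z a, ‖F2 z a‖ ≤ ∑ j, ‖z j‖ := by
    intro z a
    refine (norm_sum_le _ _).trans (Finset.sum_le_sum fun j _ => ?_)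
    exact (norm_indicator_le_norm_self (fun _ => z j) a)
  set f : (Fin N → Rd d) → Ω → Rd d := fun z ω => F2 z (g ω) with hf
  have hfmeas : ∀ z, Measurable (f z) := fun z => (hF2meas z).comp hg
  have hmem : ∀ z, MemLp (f z) 2 P := by
    intro z
    exact MemLp.of_bound (hfmeas z).aestronglyMeasurable (∑ j, ‖z j‖)
      (Filter.Eventually.of_forall fun ω => hF2bdd z (g ω))
  set Tl : (Fin N → Rd d) →ₗ[ℝ] Lp (Rd d) 2 P :=
    { toFun := fun z => (hmem z).toLp (f z)
      map_add' := by
        intro z z'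
        show MemLp.toLp (f (z + z')) (hmem (z + z'))
            = MemLp.toLp (f z) (hmem z) + MemLp.toLp (f z') (hmem z')
        rw [MemLp.toLp_congr (hmem (z + z')) ((hmem z).add (hmem z'))
          (Filter.Eventually.of_forall fun ω => hF2add z z' (g ω))]
        exact MemLp.toLp_add _ _
      map_smul' := by
        intro c z
        show MemLp.toLp (f (c • z)) (hmem (c • z)) = c • MemLp.toLp (f z) (hmem z)
        rw [MemLp.toLp_congr (hmem (c • z)) ((hmem z).const_smul c)
          (Filter.Eventually.of_forall fun ω => hF2smul c z (g ω))]
        exact MemLp.toLp_const_smul _ _ } with hTl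
  set T : (Fin N → Rd d) →L[ℝ] Lp (Rd d) 2 P := Tl.toContinuousLinearMap with hT
  have hTz : ∀ z, ⇑(T z) =ᵐ[P] f z := fun z => MemLp.coeFn_toLp (hmem z)
  have hlaw : ∀ z, Measure.map (⇑(T z)) P = empMeas z := by
    intro z
    rw [Measure.map_congr (hTz z)]
    have h1 : f z = (F2 z) ∘ g := rfl
    rw [h1, ← Measure.map_map (hF2meas z) hg, hmapg, map_empMeas (hF2meas z) w]
    congr 1
    funext j
    exact hF2w z j
  have hFeq : (fun z : Fin N → Rd d => u (empMeas z))
      = (fun Y : Lp (Rd d) 2 P => u (Measure.map (⇑Y) P)) ∘ ⇑T := by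
    funext z
    simp only [Function.comp_apply, hlaw z]
  obtain ⟨L, hL, hLval⟩ := hdiff (T x)
  have hchain : HasFDerivAt (fun z : Fin N → Rd d => u (empMeas z)) (L.comp T) x := by
    rw [hFeq]
    exact HasFDerivAt.comp x hL T.hasFDerivAt
  rw [hchain.fderiv]
  rw [ContinuousLinearMap.comp_apply, hLval]
  have hmap_x : Measure.map (⇑(T x)) P = empMeas x := hlaw x
  rw [hmap_x]
  set Θ : Rd d → ℝ := fun a => ⟪Du (empMeas x) (F2 x a), F2 (y - x) a⟫ with hΘ
  have hΘmeas : Measurable Θ :=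
    Measurable.inner (𝕜 := ℝ) ((hBorel (empMeas x)).comp (hF2meas x)) (hF2meas (y - x))
  have h2 : ∫ ω, ⟪Du (empMeas x) ((T x) ω), (T (y - x)) ω⟫ ∂P = ∫ ω, Θ (g ω) ∂P := by
    refine integral_congr_ae ?_
    filter_upwards [hTz x, hTz (y - x)] with ω e1 e2
    rw [e1, e2]
  rw [h2]
  have h3 : ∫ ω, Θ (g ω) ∂P = ∫ a, Θ a ∂(Measure.map g P) :=
    (integral_map hg.aemeasurable hΘmeas.aestronglyMeasurable).symm
  rw [h3, hmapg, integral_empMeas]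
  congr 1
  refine Finset.sum_congr rfl fun j _ => ?_
  rw [hΘ]
  simp only [hF2w]
  rfl

set_option maxHeartbeats 1000000 in
lemma key_W2_bound {d N : ℕ} {Ω : Type} [MeasurableSpace Ω] (P : Measure Ω)
    [IsProbabilityMeasure P]
    (hrich : ∀ μ : Measure (Rd d), IsP2 μ →
      ∃ X : Lp (Rd d) 2 P, Measure.map (⇑X) P = μ)
    (Du : Measure (Rd d) → Rd d → Rd d)
    (hBorel : ∀ μ : Measure (Rd d), Measurable (Du μ))
    (C : ℝ) (hC : 0 ≤ C)
    (hL2 : ∀ ξ ξ' : Ω → Rd d, Measurable ξ → Measurable ξ' → MemLp ξ 2 P → MemLp ξ' 2 P →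
      ∫ ω, ‖Du (Measure.map ξ P) (ξ ω) - Du (Measure.map ξ' P) (ξ' ω)‖ ^ 2 ∂P
        ≤ C ^ 2 * ∫ ω, ‖ξ ω - ξ' ω‖ ^ 2 ∂P)
    (hLipVersion : ∀ μ : Measure (Rd d), IsP2 μ →
      ∀ a b : Rd d, ‖Du μ a - Du μ b‖ ≤ C * ‖a - b‖)
    (μ : Measure (Rd d)) (hμ : IsP2 μ)
    (hN : 1 ≤ N) (hd : 0 < d) (x : Fin N → Rd d) :
    Real.sqrt ((N : ℝ)⁻¹ * ∑ i, ‖Du (empMeas x) (x i) - Du μ (x i)‖ ^ 2)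
      ≤ 2 * C * W2 (empMeas x) μ := by
  classical
  have hN0 : 0 < N := hN
  haveI hPx : IsProbabilityMeasure (empMeas x) := empMeas_prob hN x
  haveI hPμ : IsProbabilityMeasure μ := hμ.1
  set μb : Measure (Rd d) := empMeas x with hμb
  set Kq : ℝ := (N : ℝ)⁻¹ * ∑ i, ‖Du μb (x i) - Du μ (x i)‖ ^ 2 with hKqdef
  have hKq0 : 0 ≤ Kq := by
    apply mul_nonneg (by positivity)
    exact Finset.sum_nonneg fun i _ => by positivity
  -- the per-coupling estimate
  have key : ∀ π : Measure (Rd d × Rd d), IsCoupling π μb μ →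
      Real.sqrt Kq ≤ 2 * C * ((∫ p, ‖p.1 - p.2‖ ^ 2 ∂π) ^ (1/2 : ℝ)) := by
    intro π hcoup
    obtain ⟨hπprob, hfst, hsnd⟩ := hcoup
    haveI := hπprob
    -- index map
    set idx : Rd d → Fin N := fun a => if h : ∃ j, x j = a then h.choose else ⟨0, hN0⟩ with hidxdef
    have hidx : ∀ a ∈ Set.range x, x (idx a) = a := by
      rintro a ⟨j, rfl⟩
      have h : ∃ k, x k = x j := ⟨j, rfl⟩
      simp only [hidxdef, dif_pos h]
      exact h.choose_spec
    have hidxmeas : Measurable idx := by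
      apply measurable_to_countable'
      intro j
      have hsplit : idx ⁻¹' {j}
          = (idx ⁻¹' {j} ∩ Set.range x) ∪
            (if j = ⟨0, hN0⟩ then (Set.range x)ᶜ else ∅) := by
        ext a
        by_cases ha : a ∈ Set.range x
        · by_cases haj : idx a = j <;> by_cases hj0 : j = (⟨0, hN0⟩ : Fin N) <;>
            simp [ha, haj, hj0]
        · have : idx a = ⟨0, hN0⟩ := by
            have : ¬ ∃ k, x k = a := by
              rintro ⟨k, rfl⟩; exact ha ⟨k, rfl⟩
            simp [hidxdef, dif_neg this]
          by_cases hj0 : j = (⟨0, hN0⟩ : Fin N) <;> simp [ha, this, hj0, eq_comm]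
      rw [hsplit]
      refine MeasurableSet.union (Set.Finite.measurableSet ?_) ?_
      · exact (Set.finite_range x).subset (Set.inter_subset_right)
      · split
        · exact (Set.Finite.measurableSet (Set.finite_range x)).compl
        · exact MeasurableSet.empty
    -- κ and ν
    set toIdx : Rd d × Rd d → Fin N × Rd d := fun p => (idx p.1, p.2) with htoIdx
    have htoIdxmeas : Measurable toIdx := (hidxmeas.comp measurable_fst).prodMk measurable_snd
    set κ : Measure (Fin N × Rd d) := π.map toIdx with hκ
    set ν : Measure (Rd d) := κ.map (PhiE hd) with hν
    have hνmap : ν = π.map (PhiE hd ∘ toIdx) := by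
      rw [hν, hκ, Measure.map_map (PhiE_measurable hd) htoIdxmeas]
    have hνP2 : IsP2 ν := by
      constructor
      · rw [hνmap]
        exact Measure.isProbabilityMeasure_map ((PhiE_measurable hd).comp htoIdxmeas).aemeasurable
      · rw [hνmap]
        rw [integrable_map_measure (g := fun x : Rd d => ‖x‖ ^ 2)
          ((continuous_norm.pow 2).stronglyMeasurable.aestronglyMeasurable)
          ((PhiE_measurable hd).comp htoIdxmeas).aemeasurable]
        refine Integrable.mono' (integrable_const ((2 * Real.sqrt d + 4 * N) ^ 2)) ?_ ?_
        · exact ((((PhiE_measurable hd).comp htoIdxmeas).norm.pow_const 2)).aestronglyMeasurable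
        · refine Filter.Eventually.of_forall fun p => ?_
          have h1 := norm_PhiE_le hd (toIdx p)
          have h2 : (0:ℝ) ≤ ‖PhiE hd (toIdx p)‖ := norm_nonneg _
          have h3 : (0:ℝ) ≤ Real.sqrt d := Real.sqrt_nonneg _
          have h4 : (0:ℝ) ≤ (N:ℝ) := Nat.cast_nonneg _
          simp only [Function.comp_apply]
          rw [Real.norm_eq_abs, abs_of_nonneg (by positivity)]
          nlinarith
    obtain ⟨ζ0, hζ0⟩ := hrich ν hνP2
    set ζ : Ω → Rd d := (Lp.aestronglyMeasurable ζ0).mk _ with hζdef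
    have hζ : Measurable ζ := (Lp.aestronglyMeasurable ζ0).stronglyMeasurable_mk.measurable
    have hmapζ : Measure.map ζ P = ν := by
      rw [← Measure.map_congr (Lp.aestronglyMeasurable ζ0).ae_eq_mk, hζ0]
    -- the random variables
    set ξ : Ω → Rd d := fun ω => x (GjE hd hN0 (ζ ω)) with hξdef
    set ξ' : Ω → Rd d := fun ω => GzE hd hN0 (ζ ω) with hξ'def
    have hξmeas : Measurable ξ :=
      (measurable_of_countable x).comp ((GjE_measurable hd hN0).comp hζ)
    have hξ'meas : Measurable ξ' := (GzE_measurable hd hN0).comp hζ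
    set H2 : Rd d → Rd d × Rd d := fun v => (x (GjE hd hN0 v), GzE hd hN0 v) with hH2
    have hH2meas : Measurable H2 :=
      ((measurable_of_countable x).comp (GjE_measurable hd hN0)).prodMk (GzE_measurable hd hN0)
    have hjoint : Measure.map (fun ω => (ξ ω, ξ' ω)) P = π := by
      have e1 : (fun ω => (ξ ω, ξ' ω)) = H2 ∘ ζ := rfl
      rw [e1, ← Measure.map_map hH2meas hζ, hmapζ, hνmap,
        Measure.map_map hH2meas ((PhiE_measurable hd).comp htoIdxmeas)]
      have e2 : H2 ∘ (PhiE hd ∘ toIdx) = fun p : Rd d × Rd d => (x (idx p.1), p.2) := by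
        funext p
        show H2 (PhiE hd (toIdx p)) = _
        rw [hH2]
        simp only [GjE_PhiE hd hN0, GzE_PhiE hd hN0]; rfl
      rw [e2]
      have hae : ∀ᵐ p ∂π, p.1 ∈ Set.range x := by
        have hc : π (Prod.fst ⁻¹' (Set.range x)ᶜ) = 0 := by
          have : π (Prod.fst ⁻¹' (Set.range x)ᶜ) = μb ((Set.range x)ᶜ) := by
            rw [← hfst, Measure.map_apply measurable_fst
              (((Set.finite_range x).measurableSet).compl)]
          rw [this, hμb, empMeas_apply]
          have : ∀ j : Fin N, ((Set.range x)ᶜ : Set (Rd d)).indicator 1 (x j) = 0 := by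
            intro j
            apply Set.indicator_of_notMem
            simp [Set.mem_compl_iff]
          simp [this]
        rw [ae_iff]
        exact hc
      have he : (fun p : Rd d × Rd d => (x (idx p.1), p.2)) =ᵐ[π] id := by
        filter_upwards [hae] with p hp
        simp only [id]
        rw [hidx p.1 hp]
      rw [Measure.map_congr he, Measure.map_id]
    have hpairmeas : Measurable (fun ω => (ξ ω, ξ' ω)) := hξmeas.prodMk hξ'meas
    have hmapξ : Measure.map ξ P = μb := by
      have e1 : ξ = Prod.fst ∘ (fun ω => (ξ ω, ξ' ω)) := rfl
      rw [e1, ← Measure.map_map measurable_fst hpairmeas, hjoint, hfst]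
    have hmapξ' : Measure.map ξ' P = μ := by
      have e1 : ξ' = Prod.snd ∘ (fun ω => (ξ ω, ξ' ω)) := rfl
      rw [e1, ← Measure.map_map measurable_snd hpairmeas, hjoint, hsnd]
    have hmemξ : MemLp ξ 2 P := by
      refine MemLp.of_bound hξmeas.aestronglyMeasurable (∑ j, ‖x j‖) ?_
      refine Filter.Eventually.of_forall fun ω => ?_
      exact Finset.single_le_sum (f := fun j => ‖x j‖) (fun j _ => norm_nonneg _)
        (Finset.mem_univ _)
    have hmemξ' : MemLp ξ' 2 P := by
      rw [memLp_two_iff_integrable_sq_norm hξ'meas.aestronglyMeasurable]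
      have := hμ.2
      rw [← hmapξ'] at this
      rw [integrable_map_measure (g := fun x : Rd d => ‖x‖ ^ 2)
        ((continuous_norm.pow 2).stronglyMeasurable.aestronglyMeasurable)
        hξ'meas.aemeasurable] at this
      exact this
    -- named integrals
    set R : ℝ := ∫ p, ‖p.1 - p.2‖ ^ 2 ∂π with hR
    set A : ℝ := ∫ p, ‖Du μb p.1 - Du μ p.2‖ ^ 2 ∂π with hA
    have hR0 : 0 ≤ R := integral_nonneg fun p => by positivity
    -- integrability
    have hR1 : Integrable (fun p : Rd d × Rd d => ‖p.1‖ ^ 2) π := by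
      have := (empMeas_isP2 hN x).2
      rw [← hμb, ← hfst] at this
      rwa [integrable_map_measure (g := fun x : Rd d => ‖x‖ ^ 2)
        ((continuous_norm.pow 2).stronglyMeasurable.aestronglyMeasurable)
        measurable_fst.aemeasurable] at this
    have hR2 : Integrable (fun p : Rd d × Rd d => ‖p.2‖ ^ 2) π := by
      have := hμ.2
      rw [← hsnd] at this
      rwa [integrable_map_measure (g := fun x : Rd d => ‖x‖ ^ 2)
        ((continuous_norm.pow 2).stronglyMeasurable.aestronglyMeasurable)
        measurable_snd.aemeasurable] at this
    have hRint : Integrable (fun p : Rd d × Rd d => ‖p.1 - p.2‖ ^ 2) π := by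
      refine Integrable.mono' (((hR1.const_mul 2)).add ((hR2.const_mul 2))) ?_ ?_
      · exact ((continuous_fst.sub continuous_snd).norm.pow 2).aestronglyMeasurable
      · refine Filter.Eventually.of_forall fun p => ?_
        rw [Real.norm_eq_abs, abs_of_nonneg (by positivity)]
        have h1 : ‖p.1 - p.2‖ ≤ ‖p.1‖ + ‖p.2‖ := norm_sub_le _ _
        have h2 := pow_le_pow_left₀ (norm_nonneg (p.1 - p.2)) h1 2
        simp only [Pi.add_apply]
        nlinarith [sq_nonneg (‖p.1‖ - ‖p.2‖)]
    set D : ℝ := ‖Du μb 0 - Du μ 0‖ with hD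
    have hbound : ∀ a b : Rd d, ‖Du μb a - Du μ b‖ ≤ C * ‖a‖ + D + C * ‖b‖ := by
      intro a b
      have h1 : ‖Du μb a - Du μ b‖
          ≤ ‖Du μb a - Du μb 0‖ + ‖Du μb 0 - Du μ 0‖ + ‖Du μ 0 - Du μ b‖ := by
        have := norm_sub_le_norm_sub_add_norm_sub (Du μb a) (Du μb 0) (Du μ b)
        have h2 := norm_sub_le_norm_sub_add_norm_sub (Du μb 0) (Du μ 0) (Du μ b)
        linarith
      have h2 := hLipVersion μb (empMeas_isP2 hN x) a 0
      have h3 := hLipVersion μ hμ 0 b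
      simp only [sub_zero, zero_sub, norm_neg] at h2 h3
      linarith
    have hDumeas : Measurable (fun p : Rd d × Rd d => ‖Du μb p.1 - Du μ p.2‖ ^ 2) :=
      ((((hBorel μb).comp measurable_fst).sub ((hBorel μ).comp measurable_snd)).norm).pow_const 2
    have hAint : Integrable (fun p : Rd d × Rd d => ‖Du μb p.1 - Du μ p.2‖ ^ 2) π := by
      refine Integrable.mono'
        (((hR1.const_mul (3*C^2)).add ((hR2.const_mul (3*C^2)))).add (integrable_const (3*D^2))) ?_ ?_
      · exact hDumeas.aestronglyMeasurable
      · refine Filter.Eventually.of_forall fun p => ?_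
        rw [Real.norm_eq_abs, abs_of_nonneg (by positivity)]
        have h1 := hbound p.1 p.2
        have hD0 : 0 ≤ D := norm_nonneg _
        have h2 := pow_le_pow_left₀ (norm_nonneg (Du μb p.1 - Du μ p.2)) h1 2
        simp only [Pi.add_apply]
        nlinarith [sq_nonneg (C * ‖p.1‖ - C * ‖p.2‖), sq_nonneg (C * ‖p.1‖ - D),
          sq_nonneg (C * ‖p.2‖ - D)]
    have hKmeas : Measurable (fun p : Rd d × Rd d => ‖Du μb p.1 - Du μ p.1‖ ^ 2) :=
      ((((hBorel μb).comp measurable_fst).sub ((hBorel μ).comp measurable_fst)).norm).pow_const 2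
    have hKint : Integrable (fun p : Rd d × Rd d => ‖Du μb p.1 - Du μ p.1‖ ^ 2) π := by
      refine Integrable.mono'
        ((hR1.const_mul (8*C^2)).add (integrable_const (2*D^2))) ?_ ?_
      · exact hKmeas.aestronglyMeasurable
      · refine Filter.Eventually.of_forall fun p => ?_
        rw [Real.norm_eq_abs, abs_of_nonneg (by positivity)]
        have h1 := hbound p.1 p.1
        have hD0 : 0 ≤ D := norm_nonneg _
        have h2 := pow_le_pow_left₀ (norm_nonneg (Du μb p.1 - Du μ p.1)) h1 2
        simp only [Pi.add_apply]
        nlinarith [sq_nonneg (2*C*‖p.1‖ - D)]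
    -- Kq as integral over π
    have hKqπ : Kq = ∫ p, ‖Du μb p.1 - Du μ p.1‖ ^ 2 ∂π := by
      have h1 : ∫ a, ‖Du μb a - Du μ a‖ ^ 2 ∂(Measure.map Prod.fst π)
          = ∫ p, ‖Du μb p.1 - Du μ p.1‖ ^ 2 ∂π :=
        integral_map measurable_fst.aemeasurable
          ((((hBorel μb).sub (hBorel μ)).norm.pow_const 2).aestronglyMeasurable)
      rw [← h1, hfst, hKqdef, hμb, integral_empMeas]
    -- A via Ω
    have hAΩ : A = ∫ ω, ‖Du μb (ξ ω) - Du μ (ξ' ω)‖ ^ 2 ∂P := by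
      rw [hA, ← hjoint, integral_map hpairmeas.aemeasurable]
      exact hDumeas.aestronglyMeasurable
    have hRΩ : R = ∫ ω, ‖ξ ω - ξ' ω‖ ^ 2 ∂P := by
      rw [hR, ← hjoint, integral_map hpairmeas.aemeasurable]
      exact ((continuous_fst.sub continuous_snd).norm.pow 2).aestronglyMeasurable
    have hAR : A ≤ C ^ 2 * R := by
      rw [hAΩ, hRΩ]
      have := hL2 ξ ξ' hξmeas hξ'meas hmemξ hmemξ'
      rwa [hmapξ, hmapξ'] at this
    -- pointwise bound and conclusion
    have hpoint : ∀ p : Rd d × Rd d, ‖Du μb p.1 - Du μ p.1‖ ^ 2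
        ≤ 2 * ‖Du μb p.1 - Du μ p.2‖ ^ 2 + 2 * C ^ 2 * ‖p.1 - p.2‖ ^ 2 := by
      intro p
      have h1 : ‖Du μb p.1 - Du μ p.1‖ ≤ ‖Du μb p.1 - Du μ p.2‖ + ‖Du μ p.2 - Du μ p.1‖ :=
        norm_sub_le_norm_sub_add_norm_sub _ _ _
      have h2 : ‖Du μ p.2 - Du μ p.1‖ ≤ C * ‖p.2 - p.1‖ := hLipVersion μ hμ p.2 p.1
      rw [norm_sub_rev p.2 p.1] at h2
      have h3 : ‖Du μb p.1 - Du μ p.1‖ ≤ ‖Du μb p.1 - Du μ p.2‖ + C * ‖p.1 - p.2‖ := by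
        linarith
      have h4 := pow_le_pow_left₀ (norm_nonneg (Du μb p.1 - Du μ p.1)) h3 2
      nlinarith [sq_nonneg (‖Du μb p.1 - Du μ p.2‖ - C * ‖p.1 - p.2‖)]
    have hKle : Kq ≤ 4 * C ^ 2 * R := by
      rw [hKqπ]
      calc ∫ p, ‖Du μb p.1 - Du μ p.1‖ ^ 2 ∂π
          ≤ ∫ p, (2 * ‖Du μb p.1 - Du μ p.2‖ ^ 2 + 2 * C ^ 2 * ‖p.1 - p.2‖ ^ 2) ∂π := by
            refine integral_mono hKint ?_ hpoint
            exact (hAint.const_mul 2).add (hRint.const_mul (2 * C ^ 2))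
        _ = 2 * A + 2 * C ^ 2 * R := by
            rw [integral_add (hAint.const_mul 2) (hRint.const_mul (2 * C ^ 2)),
              integral_const_mul, integral_const_mul]
        _ ≤ 2 * (C ^ 2 * R) + 2 * C ^ 2 * R := by linarith
        _ = 4 * C ^ 2 * R := by ring
    have hrpow : (R : ℝ) ^ (1/2 : ℝ) = Real.sqrt R := (Real.sqrt_eq_rpow R).symm
    rw [hrpow]
    calc Real.sqrt Kq ≤ Real.sqrt (4 * C ^ 2 * R) := Real.sqrt_le_sqrt hKle
      _ = 2 * C * Real.sqrt R := by
          rw [show (4 : ℝ) * C ^ 2 * R = (2 * C) ^ 2 * R by ring,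
            Real.sqrt_mul (by positivity), Real.sqrt_sq (by positivity)]
  -- product coupling: nonemptiness
  have hprod : IsCoupling (μb.prod μ) μb μ := by
    refine ⟨by infer_instance, ?_, ?_⟩
    · rw [Measure.map_fst_prod]; simp
    · rw [Measure.map_snd_prod]; simp
  set S : Set ℝ := { r : ℝ | ∃ π : Measure (Rd d × Rd d), IsCoupling π μb μ ∧
      r = (∫ p, ‖p.1 - p.2‖ ^ 2 ∂π) ^ (1/2 : ℝ) } with hS
  have hSne : S.Nonempty := ⟨_, ⟨μb.prod μ, hprod, rfl⟩⟩
  have hW2 : W2 μb μ = sInf S := rfl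
  have hkeyS : ∀ r ∈ S, Real.sqrt Kq ≤ 2 * C * r := by
    rintro r ⟨π, hπ, rfl⟩
    exact key π hπ
  rcases eq_or_lt_of_le hC with hC0 | hC0
  · obtain ⟨r0, hr0⟩ := hSne
    have := hkeyS r0 hr0
    rw [← hC0] at this ⊢
    simp only [mul_zero, zero_mul] at this ⊢
    exact this
  · rw [hW2]
    have hlb : ∀ r ∈ S, Real.sqrt Kq / (2 * C) ≤ r := by
      intro r hr
      rw [div_le_iff₀ (by positivity)]
      calc Real.sqrt Kq ≤ 2 * C * r := hkeyS r hr
        _ = r * (2 * C) := by ring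
    have := le_csInf hSne hlb
    rw [div_le_iff₀ (by positivity)] at this
    calc Real.sqrt Kq ≤ sInf S * (2 * C) := this
      _ = 2 * C * sInf S := by ring


/-- **Proposition 14:3:1 of Carmona-Delarue.** Let `u : P₂(ℝ^d) → ℝ` be
differentiable in the lifted (Lions) sense with derivative family `(Du μ)_μ` satisfying the
`L²`-Lipschitz estimate `E[|Du(P_ξ)(ξ) − Du(P_{ξ'})(ξ')|²] ≤ C² E[|ξ − ξ'|²]`, and assume the
everywhere-`C`-Lipschitz version of each `Du μ` has been chosen. Then for every `μ ∈ P₂(ℝ^d)`,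
every `N ≥ 1` and all `x, y ∈ (ℝ^d)^N`, the derivative of the empirical projection
`ū^N(x) = u(μ̄^N_x)` satisfies
`|∂ū^N(x)·(y − x) − (1/N) ∑ᵢ ⟪Du(μ)(xᵢ), yᵢ − xᵢ⟫| ≤ 2C W₂(μ̄^N_x, μ) ((1/N) ∑ᵢ |yᵢ − xᵢ|²)^{1/2}`. -/
theorem empirical_gradient_approximation
    {d : ℕ} {Ω : Type} [MeasurableSpace Ω] (P : Measure Ω) [IsProbabilityMeasure P]
    (hrich : ∀ μ : Measure (Rd d), IsP2 μ →
      ∃ X : Lp (Rd d) 2 P, Measure.map (⇑X) P = μ)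
    (u : Measure (Rd d) → ℝ) (Du : Measure (Rd d) → Rd d → Rd d)
    (hBorel : ∀ μ : Measure (Rd d), Measurable (Du μ))
    (hdiff : ∀ X : Lp (Rd d) 2 P, ∃ L : Lp (Rd d) 2 P →L[ℝ] ℝ,
      HasFDerivAt (fun Y : Lp (Rd d) 2 P => u (Measure.map (⇑Y) P)) L X ∧
      ∀ Y : Lp (Rd d) 2 P, L Y = ∫ ω, ⟪Du (Measure.map (⇑X) P) (X ω), Y ω⟫ ∂P)
    (C : ℝ) (hC : 0 ≤ C)
    (hL2 : ∀ ξ ξ' : Ω → Rd d, Measurable ξ → Measurable ξ' → MemLp ξ 2 P → MemLp ξ' 2 P →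
      ∫ ω, ‖Du (Measure.map ξ P) (ξ ω) - Du (Measure.map ξ' P) (ξ' ω)‖ ^ 2 ∂P
        ≤ C ^ 2 * ∫ ω, ‖ξ ω - ξ' ω‖ ^ 2 ∂P)
    (hLipVersion : ∀ μ : Measure (Rd d), IsP2 μ →
      ∀ a b : Rd d, ‖Du μ a - Du μ b‖ ≤ C * ‖a - b‖)
    (μ : Measure (Rd d)) (hμ : IsP2 μ)
    (N : ℕ) (hN : 1 ≤ N) (x y : Fin N → Rd d) :
    |fderiv ℝ (fun z : Fin N → Rd d => u (empMeas z)) x (y - x)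
        - (N : ℝ)⁻¹ * ∑ i, ⟪Du μ (x i), y i - x i⟫|
      ≤ 2 * C * W2 (empMeas x) μ
          * Real.sqrt ((N : ℝ)⁻¹ * ∑ i, ‖y i - x i‖ ^ 2) := by
  rcases Nat.eq_zero_or_pos d with hd0 | hd
  · -- degenerate case `d = 0`
    subst hd0
    have hyx : y - x = 0 := by
      funext i
      exact Subsingleton.elim _ _
    have h1 : ∀ i : Fin N, ⟪Du μ (x i), y i - x i⟫ = (0 : ℝ) := by
      intro i
      have h2 : y i - x i = 0 := Subsingleton.elim _ _
      rw [h2, inner_zero_right]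
    rw [hyx]
    simp only [h1, Finset.sum_const_zero, mul_zero, map_zero, sub_zero, abs_zero]
    have hW := W2_nonneg (empMeas x) μ
    exact mul_nonneg (mul_nonneg (mul_nonneg (by norm_num) hC) hW) (Real.sqrt_nonneg _)
  · -- main case `0 < d`
    rw [fderiv_empirical P hrich u Du hBorel hdiff hN hd x y]
    have hcomb : (N : ℝ)⁻¹ * ∑ i, ⟪Du (empMeas x) (x i), y i - x i⟫
        - (N : ℝ)⁻¹ * ∑ i, ⟪Du μ (x i), y i - x i⟫
        = (N : ℝ)⁻¹ * ∑ i, ⟪Du (empMeas x) (x i) - Du μ (x i), y i - x i⟫ := by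
      rw [← mul_sub, ← Finset.sum_sub_distrib]
      congr 1
      refine Finset.sum_congr rfl fun i _ => ?_
      rw [inner_sub_left]
    rw [hcomb]
    have hNi : (0:ℝ) ≤ (N:ℝ)⁻¹ := by positivity
    have habs : |(N : ℝ)⁻¹ * ∑ i, ⟪Du (empMeas x) (x i) - Du μ (x i), y i - x i⟫|
        ≤ (N : ℝ)⁻¹ * ∑ i, ‖Du (empMeas x) (x i) - Du μ (x i)‖ * ‖y i - x i‖ := by
      rw [abs_mul, abs_of_nonneg hNi]
      refine mul_le_mul_of_nonneg_left ?_ hNi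
      refine (Finset.abs_sum_le_sum_abs _ _).trans (Finset.sum_le_sum fun i _ => ?_)
      exact abs_real_inner_le_norm _ _
    have hsA : (0:ℝ) ≤ ∑ i, ‖Du (empMeas x) (x i) - Du μ (x i)‖ ^ 2 :=
      Finset.sum_nonneg fun i _ => by positivity
    have hsB : (0:ℝ) ≤ ∑ i, ‖y i - x i‖ ^ 2 :=
      Finset.sum_nonneg fun i _ => by positivity
    have hs1 : (0:ℝ) ≤ ∑ i, ‖Du (empMeas x) (x i) - Du μ (x i)‖ * ‖y i - x i‖ :=
      Finset.sum_nonneg fun i _ => mul_nonneg (norm_nonneg _) (norm_nonneg _)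
    have hcs := Finset.sum_mul_sq_le_sq_mul_sq Finset.univ
      (fun i => ‖Du (empMeas x) (x i) - Du μ (x i)‖) (fun i => ‖y i - x i‖)
    have hkey : (N : ℝ)⁻¹ * ∑ i, ‖Du (empMeas x) (x i) - Du μ (x i)‖ * ‖y i - x i‖
        ≤ Real.sqrt ((N : ℝ)⁻¹ * ∑ i, ‖Du (empMeas x) (x i) - Du μ (x i)‖ ^ 2)
          * Real.sqrt ((N : ℝ)⁻¹ * ∑ i, ‖y i - x i‖ ^ 2) := by
      rw [← Real.sqrt_mul (mul_nonneg hNi hsA)]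
      have h2 : ((N : ℝ)⁻¹ * ∑ i, ‖Du (empMeas x) (x i) - Du μ (x i)‖ * ‖y i - x i‖) ^ 2
          ≤ ((N : ℝ)⁻¹ * ∑ i, ‖Du (empMeas x) (x i) - Du μ (x i)‖ ^ 2)
            * ((N : ℝ)⁻¹ * ∑ i, ‖y i - x i‖ ^ 2) := by
        have h3 := mul_le_mul_of_nonneg_left hcs (sq_nonneg ((N:ℝ)⁻¹))
        calc ((N : ℝ)⁻¹ * ∑ i, ‖Du (empMeas x) (x i) - Du μ (x i)‖ * ‖y i - x i‖) ^ 2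
            = ((N:ℝ)⁻¹)^2 * (∑ i, ‖Du (empMeas x) (x i) - Du μ (x i)‖ * ‖y i - x i‖)^2 := by
              ring
          _ ≤ ((N:ℝ)⁻¹)^2 * ((∑ i, ‖Du (empMeas x) (x i) - Du μ (x i)‖ ^ 2)
                * (∑ i, ‖y i - x i‖ ^ 2)) := h3
          _ = ((N : ℝ)⁻¹ * ∑ i, ‖Du (empMeas x) (x i) - Du μ (x i)‖ ^ 2)
                * ((N : ℝ)⁻¹ * ∑ i, ‖y i - x i‖ ^ 2) := by ring
      calc (N : ℝ)⁻¹ * ∑ i, ‖Du (empMeas x) (x i) - Du μ (x i)‖ * ‖y i - x i‖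
          = Real.sqrt (((N : ℝ)⁻¹ * ∑ i, ‖Du (empMeas x) (x i) - Du μ (x i)‖ * ‖y i - x i‖)^2) :=
            (Real.sqrt_sq (mul_nonneg hNi hs1)).symm
        _ ≤ Real.sqrt (((N : ℝ)⁻¹ * ∑ i, ‖Du (empMeas x) (x i) - Du μ (x i)‖ ^ 2)
              * ((N : ℝ)⁻¹ * ∑ i, ‖y i - x i‖ ^ 2)) := Real.sqrt_le_sqrt h2
    have hW2 := key_W2_bound P hrich Du hBorel C hC hL2 hLipVersion μ hμ hN hd x
    calc |(N : ℝ)⁻¹ * ∑ i, ⟪Du (empMeas x) (x i) - Du μ (x i), y i - x i⟫|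
        ≤ (N : ℝ)⁻¹ * ∑ i, ‖Du (empMeas x) (x i) - Du μ (x i)‖ * ‖y i - x i‖ := habs
      _ ≤ Real.sqrt ((N : ℝ)⁻¹ * ∑ i, ‖Du (empMeas x) (x i) - Du μ (x i)‖ ^ 2)
            * Real.sqrt ((N : ℝ)⁻¹ * ∑ i, ‖y i - x i‖ ^ 2) := hkey
      _ ≤ 2 * C * W2 (empMeas x) μ * Real.sqrt ((N : ℝ)⁻¹ * ∑ i, ‖y i - x i‖ ^ 2) :=
            mul_le_mul_of_nonneg_right hW2 (Real.sqrt_nonneg _)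
end
end

section
/- Let h : P₂(ℝ^d) → ℝ be differentiable (in the lifted/Lions sense) and c-Lipschitz continuous with respect to the 2-Wasserstein distance, i.e. |h(μ) − h(ν)| ≤ c W₂(μ,ν) for all μ, ν ∈ P₂(ℝ^d). Then for every μ ∈ P₂(ℝ^d) and every random variable X with law μ, E[|∂h(μ)(X)|²]^{1/2} ≤ c. -/
open MeasureTheory ProbabilityTheory
open scoped ENNReal NNReal RealInnerProductSpace

noncomputable section

variable {d : ℕ} {Ω : Type} [MeasurableSpace Ω] {P : Measure Ω} [IsProbabilityMeasure P]

lemma sqsq : ∀ x : ℝ, x ^ ((2:ℝ≥0∞).toReal) = x ^ 2 := fun x => by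
  rw [show ((2:ℝ≥0∞).toReal) = ((2:ℕ):ℝ) by norm_num, Real.rpow_natCast]

lemma isP2_law (Y : Lp (Rd d) 2 P) : IsP2 (Measure.map (⇑Y) P) := by
  have hm : AEMeasurable (⇑Y) P := (Lp.aestronglyMeasurable Y).aemeasurable
  refine ⟨Measure.isProbabilityMeasure_map hm, ?_⟩
  rw [integrable_map_measure (show Continuous (fun x : Rd d => ‖x‖ ^ 2) from continuous_norm.pow 2).aestronglyMeasurable hm]
  have := (Lp.memLp Y).integrable_norm_rpow two_ne_zero ENNReal.ofNat_ne_top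
  simp_rw [sqsq] at this
  exact this

lemma W2_le_norm_sub (Y Z : Lp (Rd d) 2 P) :
    W2 (Measure.map (⇑Y) P) (Measure.map (⇑Z) P) ≤ ‖Y - Z‖ := by
  have hY : AEMeasurable (⇑Y) P := (Lp.aestronglyMeasurable Y).aemeasurable
  have hZ : AEMeasurable (⇑Z) P := (Lp.aestronglyMeasurable Z).aemeasurable
  have hpair : AEMeasurable (fun ω => (Y ω, Z ω)) P := hY.prodMk hZ
  set π : Measure (Rd d × Rd d) := Measure.map (fun ω => (Y ω, Z ω)) P with hπ
  have hint : (∫ p, ‖p.1 - p.2‖ ^ 2 ∂π) = ∫ ω, ‖Y ω - Z ω‖ ^ 2 ∂P := by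
    rw [hπ, integral_map hpair (show Continuous (fun p : Rd d × Rd d => ‖p.1 - p.2‖ ^ 2) from (continuous_fst.sub continuous_snd).norm.pow 2).aestronglyMeasurable]
  have hmem : (∫ p, ‖p.1 - p.2‖ ^ 2 ∂π) ^ (1/2 : ℝ) ∈
      { r : ℝ | ∃ π' : Measure (Rd d × Rd d),
        IsCoupling π' (Measure.map (⇑Y) P) (Measure.map (⇑Z) P) ∧
        r = (∫ p, ‖p.1 - p.2‖ ^ 2 ∂π') ^ (1/2 : ℝ) } := by
    refine ⟨π, ⟨Measure.isProbabilityMeasure_map hpair, ?_, ?_⟩, rfl⟩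
    · rw [hπ, AEMeasurable.map_map_of_aemeasurable measurable_fst.aemeasurable hpair]; rfl
    · rw [hπ, AEMeasurable.map_map_of_aemeasurable measurable_snd.aemeasurable hpair]; rfl
  have hbdd : BddBelow { r : ℝ | ∃ π' : Measure (Rd d × Rd d),
        IsCoupling π' (Measure.map (⇑Y) P) (Measure.map (⇑Z) P) ∧
        r = (∫ p, ‖p.1 - p.2‖ ^ 2 ∂π') ^ (1/2 : ℝ) } := by
    refine ⟨0, fun r hr => ?_⟩
    obtain ⟨π', _, rfl⟩ := hr
    exact Real.rpow_nonneg (integral_nonneg fun p => by positivity) _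
  calc W2 (Measure.map (⇑Y) P) (Measure.map (⇑Z) P) ≤ _ := csInf_le hbdd hmem
    _ = ‖Y - Z‖ := by
        rw [hint, ← Real.sqrt_eq_rpow, Lp.norm_def, eLpNorm_congr_ae (Lp.coeFn_sub Y Z),
          ((Lp.memLp Y).sub (Lp.memLp Z)).eLpNorm_eq_integral_rpow_norm two_ne_zero
            ENNReal.ofNat_ne_top, ENNReal.toReal_ofReal (by positivity)]
        simp_rw [sqsq]
        rw [Real.sqrt_eq_rpow]
        norm_num

lemma eLpNorm_toReal_eq_sqrt {f : Ω → Rd d} (hf : MemLp f 2 P) :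
    (eLpNorm f 2 P).toReal = Real.sqrt (∫ ω, ‖f ω‖ ^ 2 ∂P) := by
  rw [hf.eLpNorm_eq_integral_rpow_norm two_ne_zero ENNReal.ofNat_ne_top]
  rw [ENNReal.toReal_ofReal (by positivity)]
  simp_rw [sqsq]
  rw [Real.sqrt_eq_rpow]
  norm_num
/-- If `h : P₂(ℝ^d) → ℝ` is differentiable in the lifted (Lions) sense, with
derivative represented by the Borel maps `Dh μ : ℝ^d → ℝ^d`, and `h` is `c`-Lipschitz
continuous with respect to the 2-Wasserstein distance, then for every `μ ∈ P₂(ℝ^d)` and every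
square-integrable random variable `X` with law `μ`, `E[|Dh(μ)(X)|²]^{1/2} ≤ c`. -/
theorem gradient_bound_of_wasserstein_lipschitz
    {d : ℕ} {Ω : Type} [MeasurableSpace Ω] (P : Measure Ω) [IsProbabilityMeasure P]
    (hrich : ∀ μ : Measure (Rd d), IsP2 μ →
      ∃ X : Lp (Rd d) 2 P, Measure.map (⇑X) P = μ)
    (h : Measure (Rd d) → ℝ) (Dh : Measure (Rd d) → Rd d → Rd d)
    (hBorel : ∀ μ : Measure (Rd d), Measurable (Dh μ))
    (hdiff : ∀ X : Lp (Rd d) 2 P, ∃ L : Lp (Rd d) 2 P →L[ℝ] ℝ,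
      HasFDerivAt (fun Y : Lp (Rd d) 2 P => h (Measure.map (⇑Y) P)) L X ∧
      ∀ Y : Lp (Rd d) 2 P, L Y = ∫ ω, ⟪Dh (Measure.map (⇑X) P) (X ω), Y ω⟫ ∂P)
    (c : ℝ) (hc : 0 ≤ c)
    (hLip : ∀ μ ν : Measure (Rd d), IsP2 μ → IsP2 ν → |h μ - h ν| ≤ c * W2 μ ν)
    (μ : Measure (Rd d)) (hμ : IsP2 μ)
    (X : Ω → Rd d) (hX : Measurable X) (hX2 : MemLp X 2 P)
    (hXlaw : Measure.map X P = μ) :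
    Real.sqrt (∫ ω, ‖Dh μ (X ω)‖ ^ 2 ∂P) ≤ c := by
  classical
  -- the Lp representative of X
  set X' : Lp (Rd d) 2 P := hX2.toLp X with hX'def
  have hX' : (⇑X' : Ω → Rd d) =ᵐ[P] X := hX2.coeFn_toLp
  have hlaw' : Measure.map (⇑X') P = μ := by
    rw [Measure.map_congr hX', hXlaw]
  obtain ⟨L, hL, hLrep⟩ := hdiff X'
  -- the lifted map is Lipschitz with constant c
  have hlip : LipschitzWith c.toNNReal (fun Y : Lp (Rd d) 2 P => h (Measure.map (⇑Y) P)) := by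
    apply LipschitzWith.of_dist_le_mul
    intro Y Z
    rw [Real.dist_eq, Real.coe_toNNReal c hc]
    calc |h (Measure.map (⇑Y) P) - h (Measure.map (⇑Z) P)|
        ≤ c * W2 (Measure.map (⇑Y) P) (Measure.map (⇑Z) P) :=
          hLip _ _ (isP2_law Y) (isP2_law Z)
      _ ≤ c * ‖Y - Z‖ := mul_le_mul_of_nonneg_left (W2_le_norm_sub Y Z) hc
      _ = c * dist Y Z := by rw [dist_eq_norm]
  have hLnorm : ‖L‖ ≤ c := by
    have := hL.le_of_lipschitz hlip
    rwa [Real.coe_toNNReal c hc] at this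
  -- truncations
  set f : Ω → Rd d := fun ω => Dh μ (X ω) with hfdef
  have hf : Measurable f := (hBorel μ).comp hX
  set g : ℕ → Ω → Rd d := fun n => {ω | ‖f ω‖ ≤ (n : ℝ)}.indicator f with hgdef
  have hsmeas : ∀ n : ℕ, MeasurableSet {ω | ‖f ω‖ ≤ (n : ℝ)} := fun n =>
    measurableSet_le hf.norm measurable_const
  have hgmeas : ∀ n, Measurable (g n) := fun n => hf.indicator (hsmeas n)
  have hgbound : ∀ n ω, ‖g n ω‖ ≤ (n : ℝ) := by
    intro n ω
    by_cases hω : ω ∈ {ω | ‖f ω‖ ≤ (n : ℝ)}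
    · rw [hgdef]; simp only [Set.indicator_of_mem hω]; exact hω
    · rw [hgdef]; simp only [Set.indicator_of_notMem hω, norm_zero]; positivity
  have hg2 : ∀ n, MemLp (g n) 2 P := fun n =>
    MemLp.of_bound (hgmeas n).aestronglyMeasurable (n : ℝ) (Filter.Eventually.of_forall (hgbound n))
  have hgint : ∀ n, Integrable (fun ω => ‖g n ω‖ ^ 2) P := by
    intro n
    have := (hg2 n).integrable_norm_rpow two_ne_zero ENNReal.ofNat_ne_top
    simp_rw [sqsq] at this
    exact this
  -- key bound for each truncation
  have key : ∀ n, (∫ ω, ‖g n ω‖ ^ 2 ∂P) ≤ c ^ 2 := by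
    intro n
    set Yn : Lp (Rd d) 2 P := (hg2 n).toLp (g n) with hYndef
    have hYn : (⇑Yn : Ω → Rd d) =ᵐ[P] g n := (hg2 n).coeFn_toLp
    set A : ℝ := ∫ ω, ‖g n ω‖ ^ 2 ∂P with hAdef
    have hA0 : 0 ≤ A := integral_nonneg fun ω => by positivity
    have hLYn : L Yn = A := by
      rw [hLrep Yn, hlaw']
      have hae : (fun ω => ⟪Dh μ (X' ω), Yn ω⟫) =ᵐ[P] fun ω => ‖g n ω‖ ^ 2 := by
        filter_upwards [hX', hYn] with ω h1 h2
        rw [h1, h2]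
        show ⟪f ω, g n ω⟫ = ‖g n ω‖ ^ 2
        by_cases hω : ω ∈ {ω | ‖f ω‖ ≤ (n : ℝ)}
        · rw [hgdef]; simp only [Set.indicator_of_mem hω]
          exact real_inner_self_eq_norm_sq _
        · rw [hgdef]; simp only [Set.indicator_of_notMem hω, inner_zero_right, norm_zero]
          norm_num
      rw [integral_congr_ae hae]
    have hYnorm : ‖Yn‖ = Real.sqrt A := by
      rw [hYndef, Lp.norm_toLp, eLpNorm_toReal_eq_sqrt (hg2 n)]
    have hA_le : A ≤ c * Real.sqrt A := by
      calc A = L Yn := hLYn.symm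
        _ ≤ |L Yn| := le_abs_self _
        _ ≤ ‖L‖ * ‖Yn‖ := L.le_opNorm Yn
        _ ≤ c * ‖Yn‖ := mul_le_mul_of_nonneg_right hLnorm (norm_nonneg _)
        _ = c * Real.sqrt A := by rw [hYnorm]
    have hsq : Real.sqrt A ≤ c := by
      nlinarith [Real.sq_sqrt hA0, Real.sqrt_nonneg A]
    calc A = Real.sqrt A ^ 2 := (Real.sq_sqrt hA0).symm
      _ ≤ c ^ 2 := pow_le_pow_left₀ (Real.sqrt_nonneg A) hsq 2
  -- pass to lintegrals
  have hln : ∀ n, (∫⁻ ω, ENNReal.ofReal (‖g n ω‖ ^ 2) ∂P) ≤ ENNReal.ofReal (c ^ 2) := by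
    intro n
    rw [← ofReal_integral_eq_lintegral_ofReal (hgint n)
      (Filter.Eventually.of_forall fun ω => by positivity)]
    exact ENNReal.ofReal_le_ofReal (key n)
  -- monotone convergence
  have hmono : Monotone fun n => fun ω => ENNReal.ofReal (‖g n ω‖ ^ 2) := by
    intro n m hnm
    intro ω
    by_cases hω : ω ∈ {ω | ‖f ω‖ ≤ (n : ℝ)}
    · have hfn : ‖f ω‖ ≤ (n : ℝ) := hω
      have hω' : ω ∈ {ω | ‖f ω‖ ≤ (m : ℝ)} := Set.mem_setOf.mpr (hfn.trans (Nat.cast_le.mpr hnm))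
      rw [hgdef]
      simp only [Set.indicator_of_mem hω, Set.indicator_of_mem hω']
      exact le_rfl
    · rw [hgdef]; simp only [Set.indicator_of_notMem hω, norm_zero]
      simp
  have hsup : ∀ ω, (⨆ n, ENNReal.ofReal (‖g n ω‖ ^ 2)) = ENNReal.ofReal (‖f ω‖ ^ 2) := by
    intro ω
    obtain ⟨n, hn⟩ := exists_nat_ge (‖f ω‖)
    apply le_antisymm
    · refine iSup_le fun m => ENNReal.ofReal_le_ofReal ?_
      by_cases hω : ω ∈ {ω | ‖f ω‖ ≤ (m : ℝ)}
      · rw [hgdef]; simp [Set.indicator_of_mem hω]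
      · rw [hgdef]; simp only [Set.indicator_of_notMem hω]; simpa using sq_nonneg ‖f ω‖
    · refine le_iSup_of_le n (le_of_eq ?_)
      congr 1
      rw [hgdef]
      simp [Set.indicator_of_mem (show ω ∈ {ω | ‖f ω‖ ≤ (n : ℝ)} from hn)]
  have hmeas' : ∀ n, Measurable fun ω => ENNReal.ofReal (‖g n ω‖ ^ 2) := fun n =>
    ENNReal.measurable_ofReal.comp ((hgmeas n).norm.pow_const 2)
  have hlim : (∫⁻ ω, ENNReal.ofReal (‖f ω‖ ^ 2) ∂P) ≤ ENNReal.ofReal (c ^ 2) := by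
    have := lintegral_iSup (μ := P) hmeas' hmono
    simp_rw [hsup] at this
    rw [this]
    exact iSup_le hln
  -- conclude
  rw [show (∫ ω, ‖Dh μ (X ω)‖ ^ 2 ∂P) = ∫ ω, ‖f ω‖ ^ 2 ∂P from rfl,
    integral_eq_lintegral_of_nonneg_ae (Filter.Eventually.of_forall fun ω => by positivity)
      (hf.norm.pow_const 2).aestronglyMeasurable]
  have htr : (∫⁻ ω, ENNReal.ofReal (‖f ω‖ ^ 2) ∂P).toReal ≤ c ^ 2 := by
    have := ENNReal.toReal_mono ENNReal.ofReal_ne_top hlim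
    rwa [ENNReal.toReal_ofReal (by positivity)] at this
  calc Real.sqrt _ ≤ Real.sqrt (c ^ 2) := Real.sqrt_le_sqrt htr
    _ = c := Real.sqrt_sq hc
end
end

section
/- Let μ be a Borel probability measure on ℝ^d with a strictly positive, continuously differentiable density p such that p and its first-order partial derivatives decay exponentially at infinity. Let w : ℝ^d → ℝ^d be continuously differentiable and suppose there is a constant C such that, for every pair of square-integrable random variables ξ, ξ' defined on a common atomless probability space and both having law μ, one has E[|w(ξ) − w(ξ')|²] ≤ C² E[|ξ − ξ'|²]. Then |Dw(x)e| ≤ C for every x ∈ ℝ^d and every unit vector e ∈ ℝ^d; in particular, w is C-Lipschitz continuous on ℝ^d. -/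
open MeasureTheory ProbabilityTheory Set Metric Filter
open scoped ENNReal NNReal

noncomputable section

/-- A measure is atomless: every set of positive measure contains a measurable subset of
strictly smaller positive measure. -/
def AtomlessMeasure {Ω : Type} [MeasurableSpace Ω] (P : Measure Ω) : Prop :=
  ∀ s : Set Ω, MeasurableSet s → 0 < P s → ∃ t : Set Ω,
    MeasurableSet t ∧ t ⊆ s ∧ 0 < P t ∧ P t < P s

lemma aux_pow_le_exp (n : ℕ) {ε : ℝ} (hε : 0 < ε) :
    ∃ B : ℝ, 0 ≤ B ∧ ∀ s : ℝ, 0 ≤ s → (1 + s) ^ n ≤ B * Real.exp (ε * s) := by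
  refine ⟨2 ^ n * (1 + n.factorial / ε ^ n), by positivity, fun s hs => ?_⟩
  have h1 : (1 + s) ^ n ≤ (2 * max 1 s) ^ n := by
    apply pow_le_pow_left₀ (by linarith)
    have := le_max_left 1 s; have := le_max_right 1 s; linarith
  have h2 : (max 1 s) ^ n ≤ 1 + s ^ n := by
    rcases le_total s 1 with h | h
    · rw [max_eq_left h]; simp; positivity
    · rw [max_eq_right h]; nlinarith [pow_nonneg hs n]
  have h3 : s ^ n ≤ n.factorial / ε ^ n * Real.exp (ε * s) := by
    have := Real.pow_div_factorial_le_exp (x := ε * s) (mul_nonneg hε.le hs) n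
    rw [div_le_iff₀ (by positivity)] at this
    rw [div_mul_eq_mul_div, le_div_iff₀ (by positivity)]
    calc s ^ n * ε ^ n = (ε * s) ^ n := by rw [mul_pow]; ring
      _ ≤ Real.exp (ε * s) * n.factorial := this
      _ = n.factorial * Real.exp (ε * s) := by ring
  have h4 : (1 : ℝ) ≤ Real.exp (ε * s) := Real.one_le_exp (by positivity)
  have h5 : (0:ℝ) < n.factorial := by positivity
  calc (1 + s) ^ n ≤ (2 * max 1 s) ^ n := h1
    _ = 2 ^ n * (max 1 s) ^ n := mul_pow _ _ _
    _ ≤ 2 ^ n * (1 + s ^ n) := by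
        apply mul_le_mul_of_nonneg_left h2 (by positivity)
    _ ≤ 2 ^ n * (Real.exp (ε * s) + n.factorial / ε ^ n * Real.exp (ε * s)) := by
        apply mul_le_mul_of_nonneg_left (by linarith) (by positivity)
    _ = 2 ^ n * (1 + n.factorial / ε ^ n) * Real.exp (ε * s) := by ring

lemma memL2_id {d : ℕ} (μ : Measure (Rd d)) (p : Rd d → ℝ)
    (hdensity : μ = volume.withDensity fun x => ENNReal.ofReal (p x))
    (hpos : ∀ x, 0 < p x) (hcont : Continuous p)
    {c ε : ℝ} (hε : 0 < ε) (hdec : ∀ x : Rd d, p x ≤ c * Real.exp (-ε * ‖x‖)) :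
    MemLp (fun x : Rd d => x) 2 μ := by
  have hc : 0 ≤ c := by
    have := (hpos 0).le.trans (hdec 0)
    nlinarith [Real.exp_pos (-ε * ‖(0 : Rd d)‖)]
  show MemLp id 2 μ
  rw [memLp_two_iff_integrable_sq_norm aestronglyMeasurable_id]
  rw [hdensity, integrable_withDensity_iff
    hcont.measurable.ennreal_ofReal
    (Filter.Eventually.of_forall fun x => ENNReal.ofReal_lt_top)]
  have hsimp : (fun x : Rd d => ‖id x‖ ^ 2 * (ENNReal.ofReal (p x)).toReal)
      = fun x => ‖x‖ ^ 2 * p x := by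
    funext x; rw [ENNReal.toReal_ofReal (hpos x).le]; rfl
  rw [hsimp]
  obtain ⟨B, hB, hBs⟩ := aux_pow_le_exp (d + 3) hε
  have hfin : (Module.finrank ℝ (Rd d) : ℝ) < ((d : ℝ) + 1) := by
    rw [finrank_euclideanSpace_fin]; exact lt_add_one _
  refine ((integrable_one_add_norm (E := Rd d) (μ := volume) hfin).const_mul
      (c * B)).mono' ?_ ?_
  · exact ((continuous_norm.pow 2).mul hcont).aestronglyMeasurable
  · refine Filter.Eventually.of_forall fun x => ?_
    set s := ‖x‖ with hsdef
    have hs : (0:ℝ) ≤ s := norm_nonneg x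
    have h1s : (0:ℝ) < 1 + s := by linarith
    have hpow : (1 + s) ^ (-((d : ℝ) + 1)) = ((1 + s) ^ (d + 1 : ℕ))⁻¹ := by
      rw [Real.rpow_neg h1s.le]
      norm_cast
    rw [Real.norm_of_nonneg (mul_nonneg (by positivity) (hpos x).le), hpow,
      ← div_eq_mul_inv, le_div_iff₀ (by positivity)]
    have key : s ^ 2 * p x * (1 + s) ^ (d + 1) ≤ (1 + s) ^ (d + 3) * p x := by
      have : s ^ 2 * (1 + s) ^ (d + 1) ≤ (1 + s) ^ 2 * (1 + s) ^ (d + 1) := by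
        apply mul_le_mul_of_nonneg_right _ (by positivity)
        nlinarith
      calc s ^ 2 * p x * (1 + s) ^ (d + 1) = s ^ 2 * (1 + s) ^ (d + 1) * p x := by ring
        _ ≤ (1 + s) ^ 2 * (1 + s) ^ (d + 1) * p x :=
            mul_le_mul_of_nonneg_right this (hpos x).le
        _ = (1 + s) ^ (d + 3) * p x := by rw [← pow_add]; ring_nf
    calc s ^ 2 * p x * (1 + s) ^ (d + 1) ≤ (1 + s) ^ (d + 3) * p x := key
      _ ≤ (B * Real.exp (ε * s)) * (c * Real.exp (-ε * s)) := by
          apply mul_le_mul (hBs s hs) (hdec x) (hpos x).le (by positivity)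
      _ = c * B * (Real.exp (ε * s) * Real.exp (-ε * s)) := by ring
      _ = c * B := by rw [← Real.exp_add]; ring_nf; rw [Real.exp_zero, mul_one]

lemma atomless_prod_unif {α : Type} [MeasurableSpace α] (P0 : Measure α)
    [IsProbabilityMeasure P0] :
    AtomlessMeasure (P0.prod (volume.restrict (Icc (0:ℝ) 1))) := by
  set Q : Measure ℝ := volume.restrict (Icc (0:ℝ) 1) with hQ
  haveI : IsProbabilityMeasure Q := by constructor; simp [hQ, Real.volume_Icc]
  set P := P0.prod Q with hP
  intro s hs hs0
  set F : ℝ → ℝ := fun r => (P (s ∩ univ ×ˢ Iic r)).toReal with hF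
  have hPfin : ∀ t : Set (α × ℝ), P t ≠ ∞ := fun t => measure_ne_top P t
  have hmono : Monotone F := by
    intro a b hab
    exact ENNReal.toReal_mono (hPfin _)
      (measure_mono (inter_subset_inter_right _ (prod_mono_right (Iic_subset_Iic.mpr hab))))
  have hslab : ∀ a b : ℝ, P (univ ×ˢ Ioc a b) ≤ ENNReal.ofReal (b - a) := by
    intro a b
    rw [hP, Measure.prod_prod]
    simp only [measure_univ, one_mul]
    calc Q (Ioc a b) ≤ volume (Ioc a b) := by
          rw [hQ]; exact Measure.restrict_le_self _
      _ = ENNReal.ofReal (b - a) := Real.volume_Ioc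
  have hlip : LipschitzWith 1 F := by
    apply LipschitzWith.of_dist_le_mul
    intro a b
    rcases le_total a b with hab | hab
    · rw [Real.dist_eq, Real.dist_eq, abs_of_nonpos (by simp [sub_nonpos, hmono hab]),
        abs_of_nonpos (by linarith)]
      have hsplit : s ∩ univ ×ˢ Iic b ⊆ (s ∩ univ ×ˢ Iic a) ∪ univ ×ˢ Ioc a b := by
        rintro ⟨z1, z2⟩ ⟨hzs, -, hz2⟩
        rcases le_or_gt z2 a with h | h
        · exact Or.inl ⟨hzs, trivial, h⟩
        · exact Or.inr ⟨trivial, h, hz2⟩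
      have := (measure_mono hsplit).trans (measure_union_le (μ := P) _ _)
      have h2 : P (s ∩ univ ×ˢ Iic b) ≤ P (s ∩ univ ×ˢ Iic a) + ENNReal.ofReal (b - a) :=
        this.trans (add_le_add le_rfl (hslab a b))
      have h3 := ENNReal.toReal_mono (by finiteness) h2
      rw [ENNReal.toReal_add (hPfin _) ENNReal.ofReal_ne_top,
        ENNReal.toReal_ofReal (by linarith)] at h3
      simp only [F, NNReal.coe_one, one_mul] at *
      linarith
    · rw [Real.dist_eq, Real.dist_eq, abs_of_nonneg (by simp [sub_nonneg, hmono hab]),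
        abs_of_nonneg (by linarith)]
      have hsplit : s ∩ univ ×ˢ Iic a ⊆ (s ∩ univ ×ˢ Iic b) ∪ univ ×ˢ Ioc b a := by
        rintro ⟨z1, z2⟩ ⟨hzs, -, hz2⟩
        rcases le_or_gt z2 b with h | h
        · exact Or.inl ⟨hzs, trivial, h⟩
        · exact Or.inr ⟨trivial, h, hz2⟩
      have := (measure_mono hsplit).trans (measure_union_le (μ := P) _ _)
      have h2 : P (s ∩ univ ×ˢ Iic a) ≤ P (s ∩ univ ×ˢ Iic b) + ENNReal.ofReal (a - b) :=
        this.trans (add_le_add le_rfl (hslab b a))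
      have h3 := ENNReal.toReal_mono (by finiteness) h2
      rw [ENNReal.toReal_add (hPfin _) ENNReal.ofReal_ne_top,
        ENNReal.toReal_ofReal (by linarith)] at h3
      simp only [F, NNReal.coe_one, one_mul] at *
      linarith
  have hF0 : F (-1) = 0 := by
    have : P (s ∩ univ ×ˢ Iic (-1)) = 0 := by
      refine measure_mono_null (inter_subset_right) ?_
      rw [hP, Measure.prod_prod]
      have : Q (Iic (-1)) = 0 := by
        rw [hQ, Measure.restrict_apply measurableSet_Iic]
        refine measure_mono_null ?_ (measure_empty (μ := volume))
        rintro z ⟨h1, h2, -⟩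
        norm_num at *
        linarith
      simp [this]
    simp [F, this]
  have hF1 : F 1 = (P s).toReal := by
    have hzero : P (univ ×ˢ Ioi (1:ℝ)) = 0 := by
      rw [hP, Measure.prod_prod]
      have : Q (Ioi (1:ℝ)) = 0 := by
        rw [hQ, Measure.restrict_apply measurableSet_Ioi]
        refine measure_mono_null ?_ (measure_empty (μ := volume))
        rintro z ⟨h1, h2, h3⟩
        exact absurd h3 (not_le.mpr h1)
      simp [this]
    have h1 : P s ≤ P (s ∩ univ ×ˢ Iic 1) := by
      have hsub : s ⊆ (s ∩ univ ×ˢ Iic 1) ∪ univ ×ˢ Ioi (1:ℝ) := by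
        rintro ⟨z1, z2⟩ hzs
        rcases le_or_gt z2 1 with h | h
        · exact Or.inl ⟨hzs, trivial, h⟩
        · exact Or.inr ⟨trivial, h⟩
      calc P s ≤ P (s ∩ univ ×ˢ Iic 1) + P (univ ×ˢ Ioi (1:ℝ)) :=
            (measure_mono hsub).trans (measure_union_le (μ := P) _ _)
        _ = P (s ∩ univ ×ˢ Iic 1) := by rw [hzero, add_zero]
      
    have h2 : P (s ∩ univ ×ˢ Iic 1) = P s :=
      le_antisymm (measure_mono inter_subset_left) h1
    simp [F, h2]
  have hhalfpos : 0 < (P s).toReal / 2 :=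
    half_pos (ENNReal.toReal_pos hs0.ne' (hPfin s))
  have hmem : (P s).toReal / 2 ∈ Icc (F (-1)) (F 1) := by
    rw [hF0, hF1]
    constructor
    · exact hhalfpos.le
    · linarith [hhalfpos]
  obtain ⟨r, hr, hFr⟩ := intermediate_value_Icc (by norm_num : (-1:ℝ) ≤ 1)
    (hlip.continuous.continuousOn) hmem
  refine ⟨s ∩ univ ×ˢ Iic r, hs.inter (MeasurableSet.univ.prod measurableSet_Iic),
    inter_subset_left, ?_, ?_⟩
  · rw [pos_iff_ne_zero]
    intro h0
    rw [hF] at hFr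
    simp only at hFr
    rw [h0] at hFr
    simp at hFr
    linarith [hhalfpos, hFr]
  · have h : F r < (P s).toReal := by rw [hFr]; linarith [hhalfpos]
    exact (ENNReal.toReal_lt_toReal (hPfin _) (hPfin s)).mp h

lemma coupling_set_ineq {d : ℕ} (μ : Measure (Rd d)) [IsProbabilityMeasure μ]
    (w : Rd d → Rd d) (hw : Continuous w) (C : ℝ)
    (hm2 : MemLp (fun x : Rd d => x) 2 μ)
    (hL2 : ∀ (Ω : Type) (_ : MeasurableSpace Ω) (P : Measure Ω),
      IsProbabilityMeasure P → AtomlessMeasure P →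
      ∀ ξ ξ' : Ω → Rd d, Measurable ξ → Measurable ξ' → MemLp ξ 2 P → MemLp ξ' 2 P →
        Measure.map ξ P = μ → Measure.map ξ' P = μ →
        ∫ ω, ‖w (ξ ω) - w (ξ' ω)‖ ^ 2 ∂P ≤ C ^ 2 * ∫ ω, ‖ξ ω - ξ' ω‖ ^ 2 ∂P)
    (A : Set (Rd d)) (hA : MeasurableSet A) (hAb : Bornology.IsBounded A)
    (hA0 : μ A ≠ 0) :
    ∫ z, ‖w z.1 - w z.2‖ ^ 2 ∂((μ.restrict A).prod (μ.restrict A)) ≤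
      C ^ 2 * ∫ z, ‖z.1 - z.2‖ ^ 2 ∂((μ.restrict A).prod (μ.restrict A)) := by
  have hA1 : μ A ≠ ∞ := measure_ne_top μ A
  set ν : Measure (Rd d × Rd d) := (μ.restrict A).prod (μ.restrict A) with hν
  set diag : Rd d → Rd d × Rd d := fun a => (a, a) with hdiagdef
  have hdiag : Measurable diag := measurable_id.prodMk measurable_id
  set P₀ : Measure (Rd d × Rd d) :=
    Measure.map diag (μ.restrict Aᶜ) + (μ A)⁻¹ • ν with hP₀
  set Q : Measure ℝ := volume.restrict (Icc (0:ℝ) 1) with hQdef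
  haveI hQprob : IsProbabilityMeasure Q := by constructor; simp [hQdef, Real.volume_Icc]
  -- marginals of P₀
  have hfst : Measure.map Prod.fst P₀ = μ := by
    rw [hP₀, Measure.map_add _ _ measurable_fst, Measure.map_map measurable_fst hdiag,
      Measure.map_smul]
    have h1 : (Prod.fst ∘ diag) = id := rfl
    rw [h1, Measure.map_id, hν, Measure.map_fst_prod, Measure.restrict_apply_univ,
      ← smul_assoc, smul_eq_mul, ENNReal.inv_mul_cancel hA0 hA1, one_smul, add_comm,
      Measure.restrict_add_restrict_compl hA]
  have hsnd : Measure.map Prod.snd P₀ = μ := by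
    rw [hP₀, Measure.map_add _ _ measurable_snd, Measure.map_map measurable_snd hdiag,
      Measure.map_smul]
    have h1 : (Prod.snd ∘ diag) = id := rfl
    rw [h1, Measure.map_id, hν, Measure.map_snd_prod, Measure.restrict_apply_univ,
      ← smul_assoc, smul_eq_mul, ENNReal.inv_mul_cancel hA0 hA1, one_smul, add_comm,
      Measure.restrict_add_restrict_compl hA]
  haveI hP₀prob : IsProbabilityMeasure P₀ := by
    constructor
    have : Measure.map Prod.fst P₀ univ = P₀ univ := by
      rw [Measure.map_apply measurable_fst MeasurableSet.univ, preimage_univ]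
    rw [← this, hfst, measure_univ]
  set P : Measure ((Rd d × Rd d) × ℝ) := P₀.prod Q with hPdef
  haveI : IsProbabilityMeasure P := by rw [hPdef]; infer_instance
  set ξ : (Rd d × Rd d) × ℝ → Rd d := fun z => z.1.1 with hξdef
  set ξ' : (Rd d × Rd d) × ℝ → Rd d := fun z => z.1.2 with hξ'def
  have hmξ : Measurable ξ := measurable_fst.comp measurable_fst
  have hmξ' : Measurable ξ' := measurable_snd.comp measurable_fst
  have hmapfstP : Measure.map Prod.fst P = P₀ := by
    rw [hPdef, Measure.map_fst_prod, measure_univ, one_smul]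
  have hmapξ : Measure.map ξ P = μ := by
    have : ξ = Prod.fst ∘ Prod.fst := rfl
    rw [this, ← Measure.map_map measurable_fst measurable_fst, hmapfstP, hfst]
  have hmapξ' : Measure.map ξ' P = μ := by
    have : ξ' = Prod.snd ∘ Prod.fst := rfl
    rw [this, ← Measure.map_map measurable_snd measurable_fst, hmapfstP, hsnd]
  have hmemξ : MemLp ξ 2 P := by
    have := (memLp_map_measure_iff aestronglyMeasurable_id hmξ.aemeasurable (p := 2)).mp
      (by rw [hmapξ]; exact hm2)
    exact this
  have hmemξ' : MemLp ξ' 2 P := by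
    have := (memLp_map_measure_iff aestronglyMeasurable_id hmξ'.aemeasurable (p := 2)).mp
      (by rw [hmapξ']; exact hm2)
    exact this
  -- integral computation for diagonal-vanishing continuous functions
  have hintegral : ∀ f : Rd d × Rd d → ℝ, Continuous f → (∀ a, f (a, a) = 0) →
      Integrable f ν ∧ ∫ z, f z.1 ∂P = ((μ A)⁻¹).toReal * ∫ z, f z ∂ν := by
    intro f hf hfd
    have hνr : ν = (μ.prod μ).restrict (A ×ˢ A) := by
      rw [hν, Measure.prod_restrict]
    obtain ⟨M, hM⟩ := (hAb.prod hAb).isCompact_closure.exists_bound_of_continuousOn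
      hf.continuousOn
    have hfν : Integrable f ν := by
      refine (integrable_const M).mono' hf.aestronglyMeasurable ?_
      rw [hνr]
      filter_upwards [ae_restrict_mem (hA.prod hA)] with z hz
      exact hM z (subset_closure hz)
    refine ⟨hfν, ?_⟩
    have h1 : ∫ z, f z.1 ∂P = ∫ z, f z ∂P₀ := by
      rw [← hmapfstP, integral_map measurable_fst.aemeasurable hf.aestronglyMeasurable]
    have hcomp : (f ∘ diag) = fun _ => (0:ℝ) := funext fun a => hfd a
    have hint1 : Integrable f (Measure.map diag (μ.restrict Aᶜ)) := by
      rw [integrable_map_measure hf.aestronglyMeasurable hdiag.aemeasurable]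
      rw [hcomp]
      exact integrable_const 0
    have hint2 : Integrable f ((μ A)⁻¹ • ν) :=
      hfν.smul_measure (ENNReal.inv_ne_top.mpr hA0)
    have h2 : ∫ z, f z ∂(Measure.map diag (μ.restrict Aᶜ)) = 0 := by
      rw [integral_map hdiag.aemeasurable hf.aestronglyMeasurable]
      simp [show ∀ a, f (diag a) = 0 from hfd]
    rw [h1, hP₀, integral_add_measure hint1 hint2, h2, zero_add,
      integral_smul_measure, smul_eq_mul]
  have happ := hL2 ((Rd d × Rd d) × ℝ) inferInstance P inferInstance
    (atomless_prod_unif P₀) ξ ξ' hmξ hmξ' hmemξ hmemξ' hmapξ hmapξ'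
  have hc1 : Continuous (fun z : Rd d × Rd d => ‖w z.1 - w z.2‖ ^ 2) :=
    (((hw.comp continuous_fst).sub (hw.comp continuous_snd)).norm).pow 2
  have hc2 : Continuous (fun z : Rd d × Rd d => ‖z.1 - z.2‖ ^ 2) :=
    ((continuous_fst.sub continuous_snd).norm).pow 2
  obtain ⟨hi1, he1⟩ := hintegral _ hc1 (fun a => by simp)
  obtain ⟨hi2, he2⟩ := hintegral _ hc2 (fun a => by simp)
  have hLa : ∫ ω, ‖w (ξ ω) - w (ξ' ω)‖ ^ 2 ∂P
      = ((μ A)⁻¹).toReal * ∫ z, ‖w z.1 - w z.2‖ ^ 2 ∂ν := he1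
  have hRa : ∫ ω, ‖ξ ω - ξ' ω‖ ^ 2 ∂P
      = ((μ A)⁻¹).toReal * ∫ z, ‖z.1 - z.2‖ ^ 2 ∂ν := he2
  rw [hLa, hRa] at happ
  have hcpos : 0 < ((μ A)⁻¹).toReal := by
    rw [ENNReal.toReal_inv]
    exact inv_pos.mpr (ENNReal.toReal_pos hA0 hA1)
  rw [mul_left_comm] at happ
  exact (mul_le_mul_iff_right₀ hcpos).mp happ

set_option maxHeartbeats 8000000 in
lemma lip_main {d : ℕ} (μ : Measure (Rd d)) [IsProbabilityMeasure μ]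
    (p : Rd d → ℝ)
    (hdensity : μ = volume.withDensity fun x => ENNReal.ofReal (p x))
    (hpos : ∀ x, 0 < p x) (hcontp : Continuous p)
    (w : Rd d → Rd d) (hwc : Continuous w) (C : ℝ) (hC : 0 ≤ C)
    (key : ∀ A : Set (Rd d), MeasurableSet A → Bornology.IsBounded A → μ A ≠ 0 →
      ∫ z, ‖w z.1 - w z.2‖ ^ 2 ∂((μ.restrict A).prod (μ.restrict A)) ≤
        C ^ 2 * ∫ z, ‖z.1 - z.2‖ ^ 2 ∂((μ.restrict A).prod (μ.restrict A)))
    (x y : Rd d) : ‖w x - w y‖ ≤ C * ‖x - y‖ := by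
  rcases eq_or_ne x y with rfl | hxy
  · simp
  have hD : 0 < ‖x - y‖ := by
    rw [norm_pos_iff]; exact sub_ne_zero_of_ne hxy
  set D := ‖x - y‖ with hDdef
  refine le_of_forall_pos_le_add fun δ hδ => ?_
  by_cases hsmall : ‖w x - w y‖ ≤ δ
  · nlinarith [mul_nonneg hC hD.le]
  push_neg at hsmall
  set P0 := min (p x) (p y) with hP0def
  set P1 := max (p x) (p y) with hP1def
  have hP0 : 0 < P0 := lt_min (hpos x) (hpos y)
  have hP01 : P0 ≤ P1 := min_le_max
  have hP1 : 0 < P1 := lt_of_lt_of_le hP0 hP01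
  set K1 := 4 * P1 / P0 with hK1def
  have hK1 : 0 < K1 := div_pos (by linarith) hP0
  have hsK1 : 0 ≤ Real.sqrt K1 := Real.sqrt_nonneg _
  -- choose radii from continuity
  obtain ⟨r1, hr1, hr1p⟩ := Metric.continuousAt_iff.mp hcontp.continuousAt
    (ε := P0 / 2) (by positivity)
  obtain ⟨r2, hr2, hr2p⟩ := Metric.continuousAt_iff.mp (hcontp.continuousAt (x := y))
    (ε := P0 / 2) (by positivity)
  obtain ⟨r3, hr3, hr3p⟩ := Metric.continuousAt_iff.mp (hwc.continuousAt (x := x))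
    (ε := δ / 8) (by positivity)
  obtain ⟨r4, hr4, hr4p⟩ := Metric.continuousAt_iff.mp (hwc.continuousAt (x := y))
    (ε := δ / 8) (by positivity)
  set r := min (min (min r1 r2) (min r3 r4))
      (min (D / 4) (δ / (8 * (C + 1) * (1 + Real.sqrt K1)))) / 2 with hrdef
  have hr0 : 0 < r := by
    apply half_pos
    apply lt_min (lt_min (lt_min hr1 hr2) (lt_min hr3 hr4))
    apply lt_min (by positivity) (by positivity)
  have hrle : ∀ u : ℝ, (min (min (min r1 r2) (min r3 r4))
      (min (D / 4) (δ / (8 * (C + 1) * (1 + Real.sqrt K1))))) ≤ u → r < u := by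
    intro u hu
    have : 0 < (min (min (min r1 r2) (min r3 r4))
      (min (D / 4) (δ / (8 * (C + 1) * (1 + Real.sqrt K1))))) := by
      apply lt_min (lt_min (lt_min hr1 hr2) (lt_min hr3 hr4))
      apply lt_min (by positivity) (by positivity)
    rw [hrdef]
    linarith
  have hrr1 : r < r1 := hrle r1 ((min_le_left _ _).trans ((min_le_left _ _).trans (min_le_left _ _)))
  have hrr2 : r < r2 := hrle r2 ((min_le_left _ _).trans ((min_le_left _ _).trans (min_le_right _ _)))
  have hrr3 : r < r3 := hrle r3 ((min_le_left _ _).trans ((min_le_right _ _).trans (min_le_left _ _)))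
  have hrr4 : r < r4 := hrle r4 ((min_le_left _ _).trans ((min_le_right _ _).trans (min_le_right _ _)))
  have hrD4 : r < D / 4 := hrle _ ((min_le_right _ _).trans (min_le_left _ _))
  have hrδ' : r < δ / (8 * (C + 1) * (1 + Real.sqrt K1)) :=
    hrle _ ((min_le_right _ _).trans (min_le_right _ _))
  have hrD : 2 * r < D := by linarith
  have hrδ : 2 * C * r * (1 + Real.sqrt K1) ≤ δ / 2 := by
    have h1 : 0 < 1 + Real.sqrt K1 := by linarith
    have h2 : 0 < 8 * (C + 1) * (1 + Real.sqrt K1) := by positivity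
    rw [lt_div_iff₀ h2] at hrδ'
    have hCle : C ≤ C + 1 := by linarith
    nlinarith [mul_nonneg hC hr0.le, hr0.le, mul_nonneg (mul_nonneg hC hr0.le) hsK1]
  -- properties on the balls
  have hballx : ∀ a ∈ closedBall x r, P0 / 2 ≤ p a ∧ p a ≤ 2 * P1 ∧ ‖w a - w x‖ ≤ δ / 8 := by
    intro a ha
    rw [mem_closedBall] at ha
    have h1 := hr1p (lt_of_le_of_lt ha hrr1)
    have h3 := hr3p (lt_of_le_of_lt ha hrr3)
    rw [Real.dist_eq, abs_lt] at h1
    rw [dist_eq_norm] at h3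
    have hpx : P0 ≤ p x := min_le_left _ _
    have hpx' : p x ≤ P1 := le_max_left _ _
    exact ⟨by linarith, by linarith, h3.le⟩
  have hbally : ∀ a ∈ closedBall y r, P0 / 2 ≤ p a ∧ p a ≤ 2 * P1 ∧ ‖w a - w y‖ ≤ δ / 8 := by
    intro a ha
    rw [mem_closedBall] at ha
    have h1 := hr2p (lt_of_le_of_lt ha hrr2)
    have h3 := hr4p (lt_of_le_of_lt ha hrr4)
    rw [Real.dist_eq, abs_lt] at h1
    rw [dist_eq_norm] at h3
    have hpy : P0 ≤ p y := min_le_right _ _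
    have hpy' : p y ≤ P1 := le_max_right _ _
    exact ⟨by linarith, by linarith, h3.le⟩
  set Bx := closedBall x r with hBxdef
  set By := closedBall y r with hBydef
  have hdisjB : Disjoint Bx By := by
    apply closedBall_disjoint_closedBall
    rw [dist_eq_norm]
    linarith
  -- volume facts
  set V := volume (closedBall x r) with hVdef
  have hV0 : V ≠ 0 := (measure_closedBall_pos volume x hr0).ne'
  have hVt : V ≠ ⊤ := measure_closedBall_lt_top.ne
  have hVy : volume (closedBall y r) = V := by
    rw [hVdef, Measure.addHaar_closedBall_center volume x,
      Measure.addHaar_closedBall_center volume y]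
  set v := V.toReal with hvdef
  have hv : 0 < v := ENNReal.toReal_pos hV0 hVt
  -- measure bounds on balls
  have hballμ : ∀ z : Rd d, (∀ a ∈ closedBall z r, P0 / 2 ≤ p a ∧ p a ≤ 2 * P1) →
      ENNReal.ofReal (P0 / 2) * volume (closedBall z r) ≤ μ (closedBall z r) ∧
      μ (closedBall z r) ≤ ENNReal.ofReal (2 * P1) * volume (closedBall z r) := by
    intro z hz
    rw [hdensity, withDensity_apply _ measurableSet_closedBall]
    constructor
    · calc ENNReal.ofReal (P0 / 2) * volume (closedBall z r)
          = ∫⁻ _ in closedBall z r, ENNReal.ofReal (P0 / 2) ∂volume := by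
            rw [setLIntegral_const]
        _ ≤ ∫⁻ a in closedBall z r, ENNReal.ofReal (p a) ∂volume :=
            setLIntegral_mono (hcontp.measurable.ennreal_ofReal)
              (fun a ha => ENNReal.ofReal_le_ofReal (hz a ha).1)
    · calc (∫⁻ a in closedBall z r, ENNReal.ofReal (p a) ∂volume)
          ≤ ∫⁻ _ in closedBall z r, ENNReal.ofReal (2 * P1) ∂volume :=
            setLIntegral_mono measurable_const
              (fun a ha => ENNReal.ofReal_le_ofReal (hz a ha).2)
        _ = ENNReal.ofReal (2 * P1) * volume (closedBall z r) := setLIntegral_const _ _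
  obtain ⟨hμx1, hμx2⟩ := hballμ x (fun a ha => ⟨(hballx a ha).1, (hballx a ha).2.1⟩)
  obtain ⟨hμy1, hμy2⟩ := hballμ y (fun a ha => ⟨(hbally a ha).1, (hbally a ha).2.1⟩)
  rw [hVy] at hμy1 hμy2
  set mx := (μ Bx).toReal with hmxdef
  set my := (μ By).toReal with hmydef
  have hμxt : μ Bx ≠ ⊤ := measure_ne_top μ _
  have hμyt : μ By ≠ ⊤ := measure_ne_top μ _
  have hofV : ∀ c : ℝ, 0 ≤ c → (ENNReal.ofReal c * V).toReal = c * v := by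
    intro c hc0
    rw [ENNReal.toReal_mul, ENNReal.toReal_ofReal hc0]
  have hmx1 : P0 / 2 * v ≤ mx := by
    rw [← hofV _ (by positivity)]
    exact ENNReal.toReal_mono hμxt hμx1
  have hmx2 : mx ≤ 2 * P1 * v := by
    rw [← hofV _ (by positivity)]
    exact ENNReal.toReal_mono (ENNReal.mul_ne_top ENNReal.ofReal_ne_top hVt) hμx2
  have hmy1 : P0 / 2 * v ≤ my := by
    rw [← hofV _ (by positivity)]
    exact ENNReal.toReal_mono hμyt hμy1
  have hmy2 : my ≤ 2 * P1 * v := by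
    rw [← hofV _ (by positivity)]
    exact ENNReal.toReal_mono (ENNReal.mul_ne_top ENNReal.ofReal_ne_top hVt) hμy2
  have hmx0 : 0 < mx := lt_of_lt_of_le (by positivity) hmx1
  have hmy0 : 0 < my := lt_of_lt_of_le (by positivity) hmy1
  have hKid : K1 * (P0 / 2) = 2 * P1 := by
    rw [hK1def]
    field_simp
    ring
  have hKxy : mx ≤ K1 * my :=
    calc mx ≤ 2 * P1 * v := hmx2
      _ = K1 * (P0 / 2 * v) := by rw [← hKid]; ring
      _ ≤ K1 * my := mul_le_mul_of_nonneg_left hmy1 hK1.le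
  have hKyx : my ≤ K1 * mx :=
    calc my ≤ 2 * P1 * v := hmy2
      _ = K1 * (P0 / 2 * v) := by rw [← hKid]; ring
      _ ≤ K1 * mx := mul_le_mul_of_nonneg_left hmx1 hK1.le
  -- the test set
  set A := Bx ∪ By with hAdef
  have hAmeas : MeasurableSet A := measurableSet_closedBall.union measurableSet_closedBall
  have hAb : Bornology.IsBounded A := isBounded_closedBall.union isBounded_closedBall
  have hA0 : μ A ≠ 0 := by
    intro h
    have h2 : μ Bx = 0 := measure_mono_null subset_union_left h
    have : mx = 0 := by rw [hmxdef, h2]; simp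
    linarith
  have hineq := key A hAmeas hAb hA0
  rw [Measure.prod_restrict] at hineq
  set π := μ.prod μ with hπdef
  haveI : IsProbabilityMeasure π := by rw [hπdef]; infer_instance
  have hBxm : MeasurableSet Bx := measurableSet_closedBall
  have hBym : MeasurableSet By := measurableSet_closedBall
  -- triangle helper
  have tri : ∀ u v s t : Rd d, ‖u - v‖ ≤ ‖u - s‖ + ‖s - t‖ + ‖t - v‖ := by
    intro u v s t
    have := dist_triangle4 u s t v
    simpa [dist_eq_norm] using this
  -- norm bounds
  have hmemBx : ∀ a ∈ Bx, ‖a - x‖ ≤ r := by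
    intro a ha; rw [hBxdef, mem_closedBall, dist_eq_norm] at ha; exact ha
  have hmemBy : ∀ a ∈ By, ‖a - y‖ ≤ r := by
    intro a ha; rw [hBydef, mem_closedBall, dist_eq_norm] at ha; exact ha
  have hwA : ∀ a ∈ A, ∀ b ∈ A, ‖w a - w b‖ ≤ ‖w x - w y‖ + δ / 4 := by
    have hnn : 0 ≤ ‖w x - w y‖ := norm_nonneg _
    have hwx : ∀ a ∈ Bx, ‖w a - w x‖ ≤ δ / 8 := fun a ha => (hballx a ha).2.2
    have hwy : ∀ a ∈ By, ‖w a - w y‖ ≤ δ / 8 := fun a ha => (hbally a ha).2.2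
    intro a ha b hb
    have hrev : ∀ u v : Rd d, ‖w u - w v‖ = ‖w v - w u‖ := fun u v => norm_sub_rev _ _
    rcases ha with ha | ha <;> rcases hb with hb | hb
    · calc ‖w a - w b‖ ≤ ‖w a - w x‖ + ‖w x - w x‖ + ‖w x - w b‖ := tri _ _ _ _
        _ ≤ δ / 8 + 0 + δ / 8 := by
            rw [sub_self, norm_zero, hrev x b]
            exact add_le_add (add_le_add (hwx a ha) le_rfl) (hwx b hb)
        _ ≤ ‖w x - w y‖ + δ / 4 := by linarith only [hδ, hnn]
    · calc ‖w a - w b‖ ≤ ‖w a - w x‖ + ‖w x - w y‖ + ‖w y - w b‖ := tri _ _ _ _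
        _ ≤ δ / 8 + ‖w x - w y‖ + δ / 8 := by
            rw [hrev y b]
            exact add_le_add (add_le_add (hwx a ha) le_rfl) (hwy b hb)
        _ ≤ ‖w x - w y‖ + δ / 4 := by linarith only [hδ, hnn]
    · calc ‖w a - w b‖ ≤ ‖w a - w y‖ + ‖w y - w x‖ + ‖w x - w b‖ := tri _ _ _ _
        _ ≤ δ / 8 + ‖w x - w y‖ + δ / 8 := by
            rw [hrev x b, norm_sub_rev (w y)]
            exact add_le_add (add_le_add (hwy a ha) le_rfl) (hwx b hb)
        _ ≤ ‖w x - w y‖ + δ / 4 := by linarith only [hδ, hnn]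
    · calc ‖w a - w b‖ ≤ ‖w a - w y‖ + ‖w y - w y‖ + ‖w y - w b‖ := tri _ _ _ _
        _ ≤ δ / 8 + 0 + δ / 8 := by
            rw [sub_self, norm_zero, hrev y b]
            exact add_le_add (add_le_add (hwy a ha) le_rfl) (hwy b hb)
        _ ≤ ‖w x - w y‖ + δ / 4 := by linarith only [hδ, hnn]
  -- integrability on A ×ˢ A
  have hcw : Continuous (fun z : Rd d × Rd d => ‖w z.1 - w z.2‖ ^ 2) :=
    (((hwc.comp continuous_fst).sub (hwc.comp continuous_snd)).norm).pow 2
  have hcx2 : Continuous (fun z : Rd d × Rd d => ‖z.1 - z.2‖ ^ 2) :=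
    ((continuous_fst.sub continuous_snd).norm).pow 2
  have hIL : IntegrableOn (fun z : Rd d × Rd d => ‖w z.1 - w z.2‖ ^ 2) (A ×ˢ A) π := by
    apply Measure.integrableOn_of_bounded (M := (‖w x - w y‖ + δ / 4) ^ 2)
      (measure_ne_top π _) hcw.aestronglyMeasurable
    filter_upwards [ae_restrict_mem (hAmeas.prod hAmeas)] with z hz
    rw [Real.norm_of_nonneg (by positivity)]
    exact pow_le_pow_left₀ (norm_nonneg _) (hwA z.1 hz.1 z.2 hz.2) 2
  have hIU : IntegrableOn (fun z : Rd d × Rd d => ‖z.1 - z.2‖ ^ 2) (A ×ˢ A) π := by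
    apply Measure.integrableOn_of_bounded (M := (D + 2 * r) ^ 2)
      (measure_ne_top π _) hcx2.aestronglyMeasurable
    filter_upwards [ae_restrict_mem (hAmeas.prod hAmeas)] with z hz
    rw [Real.norm_of_nonneg (by positivity)]
    refine pow_le_pow_left₀ (norm_nonneg _) ?_ 2
    rcases hz.1 with h1 | h1 <;> rcases hz.2 with h2 | h2
    · calc ‖z.1 - z.2‖ ≤ ‖z.1 - x‖ + ‖x - x‖ + ‖x - z.2‖ := tri _ _ _ _
        _ ≤ r + 0 + r := by
            rw [sub_self, norm_zero, norm_sub_rev x z.2]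
            exact add_le_add (add_le_add (hmemBx _ h1) le_rfl) (hmemBx _ h2)
        _ ≤ D + 2 * r := by linarith only [hD]
    · calc ‖z.1 - z.2‖ ≤ ‖z.1 - x‖ + ‖x - y‖ + ‖y - z.2‖ := tri _ _ _ _
        _ ≤ r + D + r := by
            rw [norm_sub_rev y z.2]
            exact add_le_add (add_le_add (hmemBx _ h1) le_rfl) (hmemBy _ h2)
        _ ≤ D + 2 * r := by linarith only [hD]
    · calc ‖z.1 - z.2‖ ≤ ‖z.1 - y‖ + ‖y - x‖ + ‖x - z.2‖ := tri _ _ _ _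
        _ ≤ r + D + r := by
            rw [norm_sub_rev x z.2, norm_sub_rev y x]
            exact add_le_add (add_le_add (hmemBy _ h1) le_rfl) (hmemBx _ h2)
        _ ≤ D + 2 * r := by linarith only [hD]
    · calc ‖z.1 - z.2‖ ≤ ‖z.1 - y‖ + ‖y - y‖ + ‖y - z.2‖ := tri _ _ _ _
        _ ≤ r + 0 + r := by
            rw [sub_self, norm_zero, norm_sub_rev y z.2]
            exact add_le_add (add_le_add (hmemBy _ h1) le_rfl) (hmemBy _ h2)
        _ ≤ D + 2 * r := by linarith only [hD]
  -- lower bound for the w-integral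
  set G := ‖w x - w y‖ - δ / 4 with hGdef
  have hG : 0 < G := by rw [hGdef]; linarith
  have hsub23 : Bx ×ˢ By ∪ By ×ˢ Bx ⊆ A ×ˢ A := by
    apply union_subset
    · exact prod_mono subset_union_left subset_union_right
    · exact prod_mono subset_union_right subset_union_left
  have hd23 : Disjoint (Bx ×ˢ By) (By ×ˢ Bx) := Set.Disjoint.set_prod_left hdisjB _ _
  have hm23 : (π (Bx ×ˢ By ∪ By ×ˢ Bx)).toReal = 2 * (mx * my) := by
    rw [measure_union hd23 (hBym.prod hBxm), Measure.prod_prod, Measure.prod_prod,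
      ENNReal.toReal_add (ENNReal.mul_ne_top hμxt hμyt) (ENNReal.mul_ne_top hμyt hμxt),
      ENNReal.toReal_mul, ENNReal.toReal_mul]
    rw [hmxdef, hmydef]; ring
  have hGle : ∀ z ∈ Bx ×ˢ By ∪ By ×ˢ Bx, G ≤ ‖w z.1 - w z.2‖ := by
    intro z hz
    have hwx : ∀ a ∈ Bx, ‖w a - w x‖ ≤ δ / 8 := fun a ha => (hballx a ha).2.2
    have hwy : ∀ a ∈ By, ‖w a - w y‖ ≤ δ / 8 := fun a ha => (hbally a ha).2.2
    rcases hz with hz | hz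
    · have := tri (w x) (w y) (w z.1) (w z.2)
      have e1 : ‖w x - w z.1‖ ≤ δ / 8 := by rw [norm_sub_rev]; exact hwx _ hz.1
      have e2 : ‖w z.2 - w y‖ ≤ δ / 8 := hwy _ hz.2
      rw [hGdef]; linarith only [this, e1, e2]
    · have := tri (w x) (w y) (w z.2) (w z.1)
      have e1 : ‖w x - w z.2‖ ≤ δ / 8 := by rw [norm_sub_rev]; exact hwx _ hz.2
      have e2 : ‖w z.1 - w y‖ ≤ δ / 8 := hwy _ hz.1
      rw [hGdef]
      rw [norm_sub_rev (w z.1) (w z.2)]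
      linarith only [this, e1, e2]
  have hlow : G ^ 2 * (2 * (mx * my)) ≤ ∫ z in A ×ˢ A, ‖w z.1 - w z.2‖ ^ 2 ∂π := by
    rw [← hm23]
    refine le_trans (setIntegral_ge_of_const_le_real ((hBxm.prod hBym).union (hBym.prod hBxm))
      (measure_ne_top _ _) (fun z hz => pow_le_pow_left₀ hG.le (hGle z hz) 2)
      (hIL.mono_set hsub23)) ?_
    exact setIntegral_mono_set hIL
      (Filter.Eventually.of_forall fun z => by positivity)
      (HasSubset.Subset.eventuallyLE hsub23)
  -- upper bound for the distance integral
  have hAAeq : A ×ˢ A = ((Bx ×ˢ Bx) ∪ (Bx ×ˢ By)) ∪ ((By ×ˢ Bx) ∪ (By ×ˢ By)) := by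
    rw [hAdef, union_prod, prod_union, prod_union]
  have hupper_piece : ∀ S : Set (Rd d × Rd d), MeasurableSet S → S ⊆ A ×ˢ A → ∀ c : ℝ,
      (∀ z ∈ S, ‖z.1 - z.2‖ ≤ c) → 0 ≤ c →
      ∫ z in S, ‖z.1 - z.2‖ ^ 2 ∂π ≤ c ^ 2 * (π S).toReal := by
    intro S hS hsub c hc hc0
    calc ∫ z in S, ‖z.1 - z.2‖ ^ 2 ∂π ≤ ∫ _ in S, c ^ 2 ∂π :=
          setIntegral_mono_on (hIU.mono_set hsub)
            (integrableOn_const (measure_ne_top _ _)) hS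
            (fun z hz => pow_le_pow_left₀ (norm_nonneg _) (hc z hz) 2)
      _ = (π S).toReal • c ^ 2 := setIntegral_const _
      _ = c ^ 2 * (π S).toReal := by rw [smul_eq_mul]; ring
  have hmR : ∀ s t : Set (Rd d), MeasurableSet s → MeasurableSet t →
      (π (s ×ˢ t)).toReal = (μ s).toReal * (μ t).toReal := by
    intro s t hs ht
    rw [hπdef, Measure.prod_prod, ENNReal.toReal_mul]
  have hup : ∫ z in A ×ˢ A, ‖z.1 - z.2‖ ^ 2 ∂π
      ≤ (2 * r) ^ 2 * (mx * mx) + (D + 2 * r) ^ 2 * (mx * my)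
        + ((D + 2 * r) ^ 2 * (my * mx) + (2 * r) ^ 2 * (my * my)) := by
    have hboundxx : ∀ z ∈ Bx ×ˢ Bx, ‖z.1 - z.2‖ ≤ 2 * r := by
      intro z hz
      calc ‖z.1 - z.2‖ ≤ ‖z.1 - x‖ + ‖x - x‖ + ‖x - z.2‖ := tri _ _ _ _
        _ ≤ r + 0 + r := by
            rw [sub_self, norm_zero, norm_sub_rev x z.2]
            exact add_le_add (add_le_add (hmemBx _ hz.1) le_rfl) (hmemBx _ hz.2)
        _ = 2 * r := by ring
    have hboundyy : ∀ z ∈ By ×ˢ By, ‖z.1 - z.2‖ ≤ 2 * r := by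
      intro z hz
      calc ‖z.1 - z.2‖ ≤ ‖z.1 - y‖ + ‖y - y‖ + ‖y - z.2‖ := tri _ _ _ _
        _ ≤ r + 0 + r := by
            rw [sub_self, norm_zero, norm_sub_rev y z.2]
            exact add_le_add (add_le_add (hmemBy _ hz.1) le_rfl) (hmemBy _ hz.2)
        _ = 2 * r := by ring
    have hboundxy : ∀ z ∈ Bx ×ˢ By, ‖z.1 - z.2‖ ≤ D + 2 * r := by
      intro z hz
      calc ‖z.1 - z.2‖ ≤ ‖z.1 - x‖ + ‖x - y‖ + ‖y - z.2‖ := tri _ _ _ _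
        _ ≤ r + D + r := by
            rw [norm_sub_rev y z.2]
            exact add_le_add (add_le_add (hmemBx _ hz.1) le_rfl) (hmemBy _ hz.2)
        _ = D + 2 * r := by ring
    have hboundyx : ∀ z ∈ By ×ˢ Bx, ‖z.1 - z.2‖ ≤ D + 2 * r := by
      intro z hz
      calc ‖z.1 - z.2‖ ≤ ‖z.1 - y‖ + ‖y - x‖ + ‖x - z.2‖ := tri _ _ _ _
        _ ≤ r + D + r := by
            rw [norm_sub_rev x z.2, norm_sub_rev y x]
            exact add_le_add (add_le_add (hmemBy _ hz.1) le_rfl) (hmemBx _ hz.2)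
        _ = D + 2 * r := by ring
    have hsub1 : Bx ×ˢ Bx ⊆ A ×ˢ A := prod_mono subset_union_left subset_union_left
    have hsub2 : Bx ×ˢ By ⊆ A ×ˢ A := prod_mono subset_union_left subset_union_right
    have hsub3 : By ×ˢ Bx ⊆ A ×ˢ A := prod_mono subset_union_right subset_union_left
    have hsub4 : By ×ˢ By ⊆ A ×ˢ A := prod_mono subset_union_right subset_union_right
    have hdisj12 : Disjoint (Bx ×ˢ Bx) (Bx ×ˢ By) := Set.Disjoint.set_prod_right hdisjB _ _
    have hdisj34 : Disjoint (By ×ˢ Bx) (By ×ˢ By) := Set.Disjoint.set_prod_right hdisjB _ _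
    have hdisjL : Disjoint ((Bx ×ˢ Bx) ∪ (Bx ×ˢ By)) ((By ×ˢ Bx) ∪ (By ×ˢ By)) := by
      apply Disjoint.union_left <;> apply Disjoint.union_right <;>
        exact Set.Disjoint.set_prod_left hdisjB _ _
    have hIU' := hIU
    rw [hAAeq] at hIU'
    rw [hAAeq, setIntegral_union hdisjL ((hBym.prod hBxm).union (hBym.prod hBym))
        (hIU'.mono_set subset_union_left)
        (hIU'.mono_set subset_union_right),
      setIntegral_union hdisj12 (hBxm.prod hBym) (hIU.mono_set hsub1) (hIU.mono_set hsub2),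
      setIntegral_union hdisj34 (hBym.prod hBym) (hIU.mono_set hsub3) (hIU.mono_set hsub4)]
    have e1 := hupper_piece _ (hBxm.prod hBxm) hsub1 _ hboundxx (by linarith)
    have e2 := hupper_piece _ (hBxm.prod hBym) hsub2 _ hboundxy (by linarith)
    have e3 := hupper_piece _ (hBym.prod hBxm) hsub3 _ hboundyx (by linarith)
    have e4 := hupper_piece _ (hBym.prod hBym) hsub4 _ hboundyy (by linarith)
    rw [hmR _ _ hBxm hBxm] at e1
    rw [hmR _ _ hBxm hBym] at e2
    rw [hmR _ _ hBym hBxm] at e3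
    rw [hmR _ _ hBym hBym] at e4
    rw [← hmxdef] at e1 e2 e3
    rw [← hmydef] at e2 e3 e4
    linarith only [e1, e2, e3, e4]
  -- combine
  have hfinal2 : G ^ 2 * (2 * (mx * my)) ≤
      C ^ 2 * ((2 * r) ^ 2 * (mx * mx) + (D + 2 * r) ^ 2 * (mx * my)
        + ((D + 2 * r) ^ 2 * (my * mx) + (2 * r) ^ 2 * (my * my))) :=
    le_trans hlow (hineq.trans (mul_le_mul_of_nonneg_left hup (by positivity)))
  have hsum : mx * mx + my * my ≤ 2 * K1 * (mx * my) := by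
    have e1 : mx * mx ≤ K1 * (mx * my) := by
      calc mx * mx ≤ K1 * my * mx := mul_le_mul_of_nonneg_right hKxy hmx0.le
        _ = K1 * (mx * my) := by ring
    have e2 : my * my ≤ K1 * (mx * my) := by
      calc my * my ≤ K1 * mx * my := mul_le_mul_of_nonneg_right hKyx hmy0.le
        _ = K1 * (mx * my) := by ring
    linarith only [e1, e2]
  have hGsq : G ^ 2 ≤ C ^ 2 * ((D + 2 * r) ^ 2 + 4 * K1 * r ^ 2) := by
    have h2m : (0:ℝ) < 2 * (mx * my) := by positivity
    apply le_of_mul_le_mul_right _ h2m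
    calc G ^ 2 * (2 * (mx * my)) ≤
        C ^ 2 * ((2 * r) ^ 2 * (mx * mx) + (D + 2 * r) ^ 2 * (mx * my)
          + ((D + 2 * r) ^ 2 * (my * mx) + (2 * r) ^ 2 * (my * my))) := hfinal2
      _ = C ^ 2 * ((D + 2 * r) ^ 2 * (2 * (mx * my)) + (2 * r) ^ 2 * (mx * mx + my * my)) := by
          ring
      _ ≤ C ^ 2 * ((D + 2 * r) ^ 2 * (2 * (mx * my)) + (2 * r) ^ 2 * (2 * K1 * (mx * my))) := by
          apply mul_le_mul_of_nonneg_left _ (by positivity)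
          exact add_le_add le_rfl (mul_le_mul_of_nonneg_left hsum (by positivity))
      _ = C ^ 2 * ((D + 2 * r) ^ 2 + 4 * K1 * r ^ 2) * (2 * (mx * my)) := by ring
  have hb0 : 0 ≤ 2 * Real.sqrt K1 * r := mul_nonneg (mul_nonneg (by norm_num) hsK1) hr0.le
  have hrhs0 : 0 ≤ (D + 2 * r) + 2 * Real.sqrt K1 * r := by linarith only [hD, hr0, hb0]
  have hsqrt : G ≤ C * ((D + 2 * r) + 2 * Real.sqrt K1 * r) := by
    have hs : Real.sqrt K1 ^ 2 = K1 := Real.sq_sqrt hK1.le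
    have hexp : (D + 2 * r) ^ 2 + 4 * K1 * r ^ 2 ≤ ((D + 2 * r) + 2 * Real.sqrt K1 * r) ^ 2 := by
      have hc0 : 0 ≤ 2 * (D + 2 * r) * (2 * Real.sqrt K1 * r) :=
        mul_nonneg (mul_nonneg (by norm_num) (by linarith only [hD, hr0])) hb0
      have hsq2 : (2 * Real.sqrt K1 * r) ^ 2 = 4 * K1 * r ^ 2 := by
        rw [mul_pow, mul_pow, hs]; ring
      have hexpand2 : ((D + 2 * r) + 2 * Real.sqrt K1 * r) ^ 2
          = (D + 2 * r) ^ 2 + (2 * Real.sqrt K1 * r) ^ 2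
            + 2 * (D + 2 * r) * (2 * Real.sqrt K1 * r) := by ring
      rw [hexpand2, hsq2]
      linarith only [hc0]
    have h1 : G ^ 2 ≤ (C * ((D + 2 * r) + 2 * Real.sqrt K1 * r)) ^ 2 := by
      calc G ^ 2 ≤ C ^ 2 * ((D + 2 * r) ^ 2 + 4 * K1 * r ^ 2) := hGsq
        _ ≤ C ^ 2 * ((D + 2 * r) + 2 * Real.sqrt K1 * r) ^ 2 :=
            mul_le_mul_of_nonneg_left hexp (by positivity)
        _ = (C * ((D + 2 * r) + 2 * Real.sqrt K1 * r)) ^ 2 := by ring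
    calc G = Real.sqrt (G ^ 2) := (Real.sqrt_sq hG.le).symm
      _ ≤ Real.sqrt ((C * ((D + 2 * r) + 2 * Real.sqrt K1 * r)) ^ 2) := Real.sqrt_le_sqrt h1
      _ = C * ((D + 2 * r) + 2 * Real.sqrt K1 * r) := Real.sqrt_sq (mul_nonneg hC hrhs0)
  have hexpand : C * ((D + 2 * r) + 2 * Real.sqrt K1 * r)
      = C * D + 2 * C * r * (1 + Real.sqrt K1) := by ring
  rw [hexpand] at hsqrt
  rw [hGdef] at hsqrt
  linarith only [hsqrt, hrδ, hδ]

/-- Let `μ` be a Borel probability measure on `ℝ^d` with a strictly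
positive `C¹` density `p` such that `p` and its derivative decay exponentially at infinity.
Let `w : ℝ^d → ℝ^d` be continuously differentiable, and suppose there is a constant `C` such
that `E[|w(ξ) − w(ξ')|²] ≤ C² E[|ξ − ξ'|²]` for every pair of square-integrable random
variables `ξ, ξ'` with law `μ` defined on a common atomless probability space. Then
`|Dw(x)e| ≤ C` for every `x` and every unit vector `e`; in particular `w` is `C`-Lipschitz. -/
theorem lipschitz_of_coupling_L2_bound
    {d : ℕ} (μ : Measure (Rd d)) [IsProbabilityMeasure μ]
    (p : Rd d → ℝ)
    (hdensity : μ = volume.withDensity fun x => ENNReal.ofReal (p x))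
    (hpos : ∀ x, 0 < p x)
    (hC1p : ContDiff ℝ 1 p)
    (hdecay : ∃ c ε : ℝ, 0 < c ∧ 0 < ε ∧ ∀ x : Rd d,
      p x ≤ c * Real.exp (-ε * ‖x‖) ∧ ‖fderiv ℝ p x‖ ≤ c * Real.exp (-ε * ‖x‖))
    (w : Rd d → Rd d) (hw : ContDiff ℝ 1 w)
    (C : ℝ) (hC : 0 ≤ C)
    (hL2 : ∀ (Ω : Type) (_ : MeasurableSpace Ω) (P : Measure Ω),
      IsProbabilityMeasure P → AtomlessMeasure P →
      ∀ ξ ξ' : Ω → Rd d, Measurable ξ → Measurable ξ' → MemLp ξ 2 P → MemLp ξ' 2 P →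
        Measure.map ξ P = μ → Measure.map ξ' P = μ →
        ∫ ω, ‖w (ξ ω) - w (ξ' ω)‖ ^ 2 ∂P ≤ C ^ 2 * ∫ ω, ‖ξ ω - ξ' ω‖ ^ 2 ∂P) :
    (∀ (x e : Rd d), ‖e‖ = 1 → ‖fderiv ℝ w x e‖ ≤ C) ∧
    (∀ x y : Rd d, ‖w x - w y‖ ≤ C * ‖x - y‖) := by
  obtain ⟨c, ε, hc, hε, hdec⟩ := hdecay
  have hm2 := memL2_id μ p hdensity hpos hC1p.continuous hε (fun x => (hdec x).1)
  have key := coupling_set_ineq μ w hw.continuous C hm2 hL2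
  have hlip : ∀ x y : Rd d, ‖w x - w y‖ ≤ C * ‖x - y‖ :=
    lip_main μ p hdensity hpos hC1p.continuous w hw.continuous C hC key
  refine ⟨?_, hlip⟩
  intro x e he
  have hlipW : LipschitzWith (Real.toNNReal C) w := by
    apply LipschitzWith.of_dist_le_mul
    intro a b
    rw [dist_eq_norm, dist_eq_norm, Real.coe_toNNReal C hC]
    exact hlip a b
  have hd : HasFDerivAt w (fderiv ℝ w x) x :=
    ((hw.differentiable one_ne_zero) x).hasFDerivAt
  have h1 : ‖fderiv ℝ w x‖ ≤ C := by
    have := hd.le_of_lipschitz hlipW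
    rwa [Real.coe_toNNReal C hC] at this
  calc ‖fderiv ℝ w x e‖ ≤ ‖fderiv ℝ w x‖ * ‖e‖ := (fderiv ℝ w x).le_opNorm e
    _ = ‖fderiv ℝ w x‖ := by rw [he, mul_one]
    _ ≤ C := h1
end
end
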